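/- arXiv:1710.01374 — 2 statements merged into one kernel-verified Lean document; each statement's English description precedes it below -/
import Mathlib

section
/- Let χ : [n] → {•, ∘} with χ^{-1}(∘) = {1 = l0 < l1 < ... < lm = n}, and σ ≤ π in INC(χ) with π = {V1,...,Vt}. Then μ_INC(σ, π) = Π_{s=1}^{t} Π_{i=1}^{m} μ_NC(σ_i|_{Vs ∩ [l_{i-1}, l_i]}, 1_{Vs ∩ [l_{i-1}, l_i]}), where σ_i is the restriction of σ to [l_{i-1}, l_i], μ_NC is the Möbius function of the noncrossing partition lattice of the relevant finite ordered set, and μ over the empty set is 1. -/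
open scoped Classical

section Defs

variable {α : Type*}

/-- `P` is a partition of the finite set `S`: blocks are nonempty subsets of `S`
and every element of `S` lies in a unique block. -/
def IsPartitionOn (S : Finset α) (P : Finset (Finset α)) : Prop :=
  (∀ B ∈ P, B.Nonempty ∧ B ⊆ S) ∧ ∀ x ∈ S, ∃! B, B ∈ P ∧ x ∈ B

/-- `P` is noncrossing: no `s₁ < r₁ < s₂ < r₂` with `s₁, s₂` in one block and
`r₁, r₂` in a different block. -/
def Noncrossing [LinearOrder α] (P : Finset (Finset α)) : Prop :=
  ∀ V ∈ P, ∀ W ∈ P, V ≠ W →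
    ¬ ∃ s₁ r₁ s₂ r₂, s₁ ∈ V ∧ s₂ ∈ V ∧ r₁ ∈ W ∧ r₂ ∈ W ∧ s₁ < r₁ ∧ r₁ < s₂ ∧ s₂ < r₂

/-- A block `V` is inner if some other block `W` has elements `s, t` with
`s < v < t` for all `v ∈ V`. -/
def IsInnerBlock [LinearOrder α] (P : Finset (Finset α)) (V : Finset α) : Prop :=
  ∃ W ∈ P, W ≠ V ∧ ∃ s ∈ W, ∃ t ∈ W, ∀ v ∈ V, s < v ∧ v < t

/-- `P` is an interval partition: no `s₁ < r < s₂` with `s₁, s₂` in one block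
and `r` in a different block. -/
def IsIntervalPartition [LinearOrder α] (P : Finset (Finset α)) : Prop :=
  ∀ V ∈ P, ∀ W ∈ P, V ≠ W →
    ¬ ∃ s₁ r s₂, s₁ ∈ V ∧ s₂ ∈ V ∧ r ∈ W ∧ s₁ < r ∧ r < s₂

/-- Reversed refinement order: every block of `P` is contained in a block of `Q`. -/
def Refines (P Q : Finset (Finset α)) : Prop := ∀ B ∈ P, ∃ C ∈ Q, B ⊆ C

/-- Noncrossing partition of the finite ordered set `S`. -/
def NCOn [LinearOrder α] (S : Finset α) (P : Finset (Finset α)) : Prop :=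
  IsPartitionOn S P ∧ Noncrossing P

/-- Interval-noncrossing partition of `S` w.r.t. the coloring `χ`
(`χ k = true` means `k` is colored `∘`): a noncrossing partition such that
no `∘`-colored element lies in an inner block. -/
def INCOn [LinearOrder α] (S : Finset α) (χ : α → Bool) (P : Finset (Finset α)) : Prop :=
  IsPartitionOn S P ∧ Noncrossing P ∧
    ∀ V ∈ P, IsInnerBlock P V → ∀ k ∈ V, χ k = false

/-- Restriction of a partition to a subset: nonempty intersections of blocks with `A`. -/
def restrictPart [DecidableEq α] (P : Finset (Finset α)) (A : Finset α) : Finset (Finset α) :=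
  (P.image (· ∩ A)).filter (·.Nonempty)

end Defs

section Mobius

/-- `μ` is the Möbius function of the finite poset given by the relation `le`
restricted to the finite set `S`: it is a two-sided convolution inverse of
the zeta function. -/
def IsMobiusOn {β : Type*} (S : Finset β) (le : β → β → Prop) (μ : β → β → ℂ) : Prop :=
  ∀ a ∈ S, ∀ b ∈ S, le a b →
    ((∑ c ∈ S.filter (fun c => le a c ∧ le c b), μ a c) = if a = b then 1 else 0) ∧
    ((∑ c ∈ S.filter (fun c => le a c ∧ le c b), μ c b) = if a = b then 1 else 0)

/-- The finite set of interval-noncrossing partitions of `S ⊆ [n]` w.r.t. `χ`. -/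
noncomputable def INCset {n : ℕ} (S : Finset (Fin n)) (χ : Fin n → Bool) :
    Finset (Finset (Finset (Fin n))) :=
  Finset.univ.filter (fun Q => INCOn S χ Q)

/-- The finite set of noncrossing partitions of `S ⊆ [n]`. -/
noncomputable def NCset {n : ℕ} (S : Finset (Fin n)) :
    Finset (Finset (Finset (Fin n))) :=
  Finset.univ.filter (fun Q => NCOn S Q)

end Mobius

set_option linter.unusedSectionVars false

namespace INCP
open Finset
variable {α : Type*} [DecidableEq α]

theorem refines_refl (P : Finset (Finset α)) : Refines P P := fun B hB => ⟨B, hB, subset_rfl⟩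

theorem refines_trans {P Q R : Finset (Finset α)} (h1 : Refines P Q) (h2 : Refines Q R) :
    Refines P R := by
  intro B hB
  obtain ⟨C, hC, hBC⟩ := h1 B hB
  obtain ⟨D, hD, hCD⟩ := h2 C hC
  exact ⟨D, hD, hBC.trans hCD⟩

variable {S A T : Finset α} {P Q : Finset (Finset α)}

theorem part_mem_S (hP : IsPartitionOn S P) {B : Finset α} {x : α} (hB : B ∈ P) (hx : x ∈ B) :
    x ∈ S := (hP.1 B hB).2 hx

theorem part_nonempty (hP : IsPartitionOn S P) {B : Finset α} (hB : B ∈ P) : B.Nonempty :=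
  (hP.1 B hB).1

theorem part_disj (hP : IsPartitionOn S P) {B C : Finset α} {x : α} (hB : B ∈ P) (hC : C ∈ P)
    (hx : x ∈ B) (hx' : x ∈ C) : B = C := by
  obtain ⟨D, _, hun⟩ := hP.2 x (part_mem_S hP hB hx)
  rw [hun B ⟨hB, hx⟩, hun C ⟨hC, hx'⟩]

theorem exists_block (hP : IsPartitionOn S P) {x : α} (hx : x ∈ S) : ∃ B ∈ P, x ∈ B := by
  obtain ⟨D, ⟨hD, hxD⟩, _⟩ := hP.2 x hx
  exact ⟨D, hD, hxD⟩

theorem mem_restrictPart {C : Finset α} :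
    C ∈ restrictPart P A ↔ (∃ B ∈ P, B ∩ A = C) ∧ C.Nonempty := by
  simp [restrictPart, Finset.mem_filter, Finset.mem_image]

theorem restrictPart_isPartition (hP : IsPartitionOn S P) (hA : A ⊆ S) :
    IsPartitionOn A (restrictPart P A) := by
  constructor
  · intro C hC
    rw [mem_restrictPart] at hC
    obtain ⟨⟨B, _, rfl⟩, hne⟩ := hC
    exact ⟨hne, inter_subset_right⟩
  · intro x hx
    obtain ⟨B, hB, hxB⟩ := exists_block hP (hA hx)
    refine ⟨B ∩ A, ⟨mem_restrictPart.2 ⟨⟨B, hB, rfl⟩, ⟨x, mem_inter.2 ⟨hxB, hx⟩⟩⟩,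
      mem_inter.2 ⟨hxB, hx⟩⟩, ?_⟩
    rintro C ⟨hC, hxC⟩
    rw [mem_restrictPart] at hC
    obtain ⟨⟨B', hB', rfl⟩, _⟩ := hC
    rw [part_disj hP hB' hB (mem_inter.1 hxC).1 hxB]

theorem restrictPart_noncrossing [LinearOrder α] (hnc : Noncrossing P) :
    Noncrossing (restrictPart P A) := by
  intro V hV W hW hVW ⟨s₁, r₁, s₂, r₂, h1, h2, h3, h4, h5, h6, h7⟩
  rw [mem_restrictPart] at hV hW
  obtain ⟨⟨B, hB, rfl⟩, _⟩ := hV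
  obtain ⟨⟨C, hC, rfl⟩, _⟩ := hW
  have hBC : B ≠ C := by rintro rfl; exact hVW rfl
  exact hnc B hB C hC hBC ⟨s₁, r₁, s₂, r₂, (mem_inter.1 h1).1, (mem_inter.1 h2).1,
    (mem_inter.1 h3).1, (mem_inter.1 h4).1, h5, h6, h7⟩

theorem refines_restrictPart (h : Refines P Q) : Refines (restrictPart P A) (restrictPart Q A) := by
  intro C hC
  rw [mem_restrictPart] at hC
  obtain ⟨⟨B, hB, rfl⟩, hne⟩ := hC
  obtain ⟨B', hB', hBB'⟩ := h B hB
  refine ⟨B' ∩ A, mem_restrictPart.2 ⟨⟨B', hB', rfl⟩, ?_⟩, inter_subset_inter hBB' subset_rfl⟩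
  exact hne.mono (inter_subset_inter hBB' subset_rfl)

theorem restrictPart_restrictPart (hAT : A ⊆ T) :
    restrictPart (restrictPart P T) A = restrictPart P A := by
  ext C
  rw [mem_restrictPart, mem_restrictPart]
  constructor
  · rintro ⟨⟨B, hB, rfl⟩, hne⟩
    rw [mem_restrictPart] at hB
    obtain ⟨⟨B', hB', rfl⟩, _⟩ := hB
    refine ⟨⟨B', hB', ?_⟩, hne⟩
    rw [inter_assoc, inter_eq_right.2 hAT]
  · rintro ⟨⟨B, hB, rfl⟩, hne⟩
    refine ⟨⟨B ∩ T, mem_restrictPart.2 ⟨⟨B, hB, rfl⟩, hne.mono ?_⟩, ?_⟩, hne⟩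
    · exact inter_subset_inter subset_rfl hAT
    · rw [inter_assoc, inter_eq_right.2 hAT]

theorem restrictPart_self (hP : IsPartitionOn S P) : restrictPart P S = P := by
  ext C
  rw [mem_restrictPart]
  constructor
  · rintro ⟨⟨B, hB, rfl⟩, _⟩
    rwa [inter_eq_left.2 (hP.1 B hB).2]
  · intro hC
    exact ⟨⟨C, hC, inter_eq_left.2 (hP.1 C hC).2⟩, (hP.1 C hC).1⟩

theorem restrictPart_empty : restrictPart P (∅ : Finset α) = ∅ := by
  ext C
  rw [mem_restrictPart]
  constructor
  · rintro ⟨⟨B, hB, h⟩, hne⟩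
    rw [Finset.inter_empty] at h
    subst h
    simp at hne
  · intro h; simp at h

theorem restrictPart_singleton (hP : IsPartitionOn S P) {x : α} (hx : x ∈ S) :
    restrictPart P {x} = {{x}} := by
  obtain ⟨B, hB, hxB⟩ := exists_block hP hx
  ext C
  rw [mem_restrictPart]
  simp only [Finset.mem_singleton]
  constructor
  · rintro ⟨⟨B', _, rfl⟩, hne⟩
    obtain ⟨y, hy⟩ := hne
    have : y = x := by simpa using (mem_inter.1 hy).2
    subst this
    apply Finset.Subset.antisymm inter_subset_right
    simp [hy]
  · rintro rfl
    exact ⟨⟨B, hB, by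
      apply Finset.Subset.antisymm inter_subset_right
      simp [hxB]⟩, ⟨x, by simp⟩⟩

theorem partitionOn_empty_eq (hP : IsPartitionOn (∅ : Finset α) P) : P = ∅ := by
  ext B
  simp only [Finset.notMem_empty, iff_false]
  intro hB
  obtain ⟨x, hx⟩ := part_nonempty hP hB
  exact absurd (part_mem_S hP hB hx) (by simp)

theorem partitionOn_singleton_eq {x : α} (hP : IsPartitionOn ({x} : Finset α) P) :
    P = {{x}} := by
  obtain ⟨B, hB, hxB⟩ := exists_block hP (Finset.mem_singleton_self x)
  have hBx : B = {x} := by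
    apply Finset.Subset.antisymm (hP.1 B hB).2
    simp [hxB]
  ext C
  simp only [Finset.mem_singleton]
  constructor
  · intro hC
    obtain ⟨y, hy⟩ := part_nonempty hP hC
    have : y = x := by simpa using part_mem_S hP hC hy
    subst this
    rw [part_disj hP hC hB hy hxB, hBx]
  · rintro rfl
    rwa [← hBx]

theorem isPartitionOn_top {A : Finset α} (hA : A.Nonempty) : IsPartitionOn A ({A} : Finset (Finset α)) := by
  constructor
  · intro B hB
    rw [Finset.mem_singleton] at hB
    subst hB; exact ⟨hA, subset_rfl⟩
  · intro x hx
    exact ⟨A, ⟨Finset.mem_singleton_self A, hx⟩, by rintro C ⟨hC, _⟩; simpa using hC⟩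

theorem isPartitionOn_empty : IsPartitionOn (∅ : Finset α) (∅ : Finset (Finset α)) := by
  constructor
  · intro B hB; simp at hB
  · intro x hx; simp at hx

theorem refines_antisymm (hP : IsPartitionOn S P) (hQ : IsPartitionOn S Q)
    (h1 : Refines P Q) (h2 : Refines Q P) : P = Q := by
  have key : ∀ B ∈ P, B ∈ Q := by
    intro B hB
    obtain ⟨C, hC, hBC⟩ := h1 B hB
    obtain ⟨B', hB', hCB'⟩ := h2 C hC
    obtain ⟨x, hx⟩ := part_nonempty hP hB
    have hBB' : B = B' := part_disj hP hB hB' hx (hCB' (hBC hx))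
    have : B = C := Finset.Subset.antisymm hBC (by rw [hBB']; exact hCB')
    rwa [this]
  have key2 : ∀ B ∈ Q, B ∈ P := by
    intro B hB
    obtain ⟨C, hC, hBC⟩ := h2 B hB
    obtain ⟨B', hB', hCB'⟩ := h1 C hC
    obtain ⟨x, hx⟩ := part_nonempty hQ hB
    have hBB' : B = B' := part_disj hQ hB hB' hx (hCB' (hBC hx))
    have : B = C := Finset.Subset.antisymm hBC (by rw [hBB']; exact hCB')
    rwa [this]
  ext B; exact ⟨key B, key2 B⟩

theorem top_refines_eq (hQ : IsPartitionOn A Q) (h : Refines {A} Q) : Q = {A} := by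
  obtain ⟨C, hC, hAC⟩ := h A (Finset.mem_singleton_self A)
  have hCA : C = A := Finset.Subset.antisymm (hQ.1 C hC).2 hAC
  subst hCA
  ext B
  simp only [Finset.mem_singleton]
  constructor
  · intro hB
    obtain ⟨x, hx⟩ := part_nonempty hQ hB
    exact part_disj hQ hB hC hx ((hQ.1 B hB).2 hx)
  · rintro rfl; exact hC

theorem refines_top {A : Finset α} (h : ∀ B ∈ P, B ⊆ A) : Refines P ({A} : Finset (Finset α)) :=
  fun B hB => ⟨A, Finset.mem_singleton_self A, h B hB⟩

theorem restrictPart_eq_filter (hP : IsPartitionOn S P)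
    (h : ∀ B ∈ P, (B ∩ T).Nonempty → B ⊆ T) :
    restrictPart P T = P.filter (· ⊆ T) := by
  ext C
  rw [mem_restrictPart, Finset.mem_filter]
  constructor
  · rintro ⟨⟨B, hB, rfl⟩, hne⟩
    have hBT : B ⊆ T := h B hB hne
    rw [inter_eq_left.2 hBT]
    exact ⟨hB, hBT⟩
  · rintro ⟨hC, hCT⟩
    exact ⟨⟨C, hC, inter_eq_left.2 hCT⟩, part_nonempty hP hC⟩

theorem isPartitionOn_union {X Y : Finset α} (hX : IsPartitionOn X P) (hY : IsPartitionOn Y Q)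
    (hd : Disjoint X Y) : IsPartitionOn (X ∪ Y) (P ∪ Q) := by
  constructor
  · intro B hB
    rcases Finset.mem_union.1 hB with hB | hB
    · exact ⟨part_nonempty hX hB, (hX.1 B hB).2.trans subset_union_left⟩
    · exact ⟨part_nonempty hY hB, (hY.1 B hB).2.trans subset_union_right⟩
  · intro x hx
    rcases Finset.mem_union.1 hx with hx | hx
    · obtain ⟨B, hB, hxB⟩ := exists_block hX hx
      refine ⟨B, ⟨Finset.mem_union_left _ hB, hxB⟩, ?_⟩
      rintro C ⟨hC, hxC⟩
      rcases Finset.mem_union.1 hC with hC | hC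
      · exact part_disj hX hC hB hxC hxB
      · exact absurd (part_mem_S hY hC hxC) (Finset.disjoint_left.1 hd.symm · hx)
    · obtain ⟨B, hB, hxB⟩ := exists_block hY hx
      refine ⟨B, ⟨Finset.mem_union_right _ hB, hxB⟩, ?_⟩
      rintro C ⟨hC, hxC⟩
      rcases Finset.mem_union.1 hC with hC | hC
      · exact absurd (part_mem_S hX hC hxC) (Finset.disjoint_left.1 hd · hx)
      · exact part_disj hY hC hB hxC hxB

end INCP
namespace INCP
open Finset
variable {β : Type*}

theorem mobius_refl {S : Finset β} {le : β → β → Prop} {μ : β → β → ℂ}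
    (hμ : IsMobiusOn S le μ) (hanti : ∀ a ∈ S, ∀ b ∈ S, le a b → le b a → a = b)
    {a : β} (ha : a ∈ S) (hra : le a a) : μ a a = 1 := by
  classical
  have h := (hμ a ha a ha hra).1
  have hfil : S.filter (fun c => le a c ∧ le c a) = {a} := by
    ext c; simp only [mem_filter, mem_singleton]
    constructor
    · rintro ⟨hc, h1, h2⟩; exact (hanti a ha c hc h1 h2).symm
    · rintro rfl; exact ⟨ha, hra, hra⟩
  rw [hfil] at h; simpa using h

theorem mobius_unique {S : Finset β} {le : β → β → Prop} {μ F : β → β → ℂ}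
    (hrefl : ∀ a ∈ S, le a a)
    (htrans : ∀ a b c : β, le a b → le b c → le a c)
    (hanti : ∀ a ∈ S, ∀ b ∈ S, le a b → le b a → a = b)
    (hμ : IsMobiusOn S le μ)
    (hF : ∀ a ∈ S, ∀ b ∈ S, le a b →
      (∑ c ∈ S.filter (fun c => le a c ∧ le c b), F a c) = if a = b then 1 else 0)
    {a b : β} (ha : a ∈ S) (hb : b ∈ S) (hab : le a b) : μ a b = F a b := by
  classical
  have main : ∀ N, ∀ b ∈ S, le a b → (S.filter (fun c => le a c ∧ le c b)).card ≤ N →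
      μ a b = F a b := by
    intro N
    induction N with
    | zero =>
      intro b hb hab hcard
      exfalso
      have hmem : b ∈ S.filter (fun c => le a c ∧ le c b) := mem_filter.2 ⟨hb, hab, hrefl b hb⟩
      have := Finset.card_pos.2 ⟨b, hmem⟩
      omega
    | succ N ih =>
      intro b hb hab hcard
      have hbmem : b ∈ S.filter (fun c => le a c ∧ le c b) := mem_filter.2 ⟨hb, hab, hrefl b hb⟩
      have h1 := (hμ a ha b hb hab).1
      have h2 := hF a ha b hb hab
      rw [← Finset.add_sum_erase _ _ hbmem] at h1 h2
      have key : ∀ c ∈ (S.filter (fun c => le a c ∧ le c b)).erase b, μ a c = F a c := by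
        intro c hc
        obtain ⟨hcb, hcmem⟩ := Finset.mem_erase.1 hc
        obtain ⟨hcS, hac, hcble⟩ := mem_filter.1 hcmem
        apply ih c hcS hac
        have hsub : S.filter (fun d => le a d ∧ le d c) ⊆
            (S.filter (fun d => le a d ∧ le d b)).erase b := by
          intro d hd
          obtain ⟨hdS, h3, h4⟩ := mem_filter.1 hd
          refine Finset.mem_erase.2 ⟨?_, mem_filter.2 ⟨hdS, h3, htrans _ _ _ h4 hcble⟩⟩
          rintro rfl
          exact hcb (hanti c hcS d hdS hcble h4)
        have hle := Finset.card_le_card hsub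
        have herase := Finset.card_erase_of_mem hbmem
        have hpos := Finset.card_pos.2 ⟨b, hbmem⟩
        omega
      rw [Finset.sum_congr rfl key] at h1
      exact add_right_cancel (h1.trans h2.symm)
  exact main _ b hb hab le_rfl

end INCP
namespace INCP
open Finset
variable {n : ℕ}

theorem mem_NCset {A : Finset (Fin n)} {P : Finset (Finset (Fin n))} :
    P ∈ NCset A ↔ NCOn A P := by simp [NCset]

theorem mem_INCset {χ : Fin n → Bool} {S : Finset (Fin n)} {P : Finset (Finset (Fin n))} :
    P ∈ INCset S χ ↔ INCOn S χ P := by simp [INCset]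

theorem noncrossing_of_subset {α : Type*} [LinearOrder α] {P Q : Finset (Finset α)}
    (h : Q ⊆ P) (hP : Noncrossing P) : Noncrossing Q :=
  fun V hV W hW hne hpat => hP V (h hV) W (h hW) hne hpat

theorem noncrossing_singleton {α : Type*} [LinearOrder α] {A : Finset α} :
    Noncrossing ({A} : Finset (Finset α)) := by
  intro V hV W hW hne
  rw [Finset.mem_singleton] at hV hW
  exact absurd (hV.trans hW.symm) hne

theorem noncrossing_empty {α : Type*} [LinearOrder α] :
    Noncrossing (∅ : Finset (Finset α)) := by
  intro V hV; simp at hV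

theorem NCOn_top {A : Finset (Fin n)} (hA : A.Nonempty) : NCOn A ({A} : Finset (Finset (Fin n))) :=
  ⟨isPartitionOn_top hA, noncrossing_singleton⟩

theorem NCOn_empty : NCOn (∅ : Finset (Fin n)) (∅ : Finset (Finset (Fin n))) :=
  ⟨isPartitionOn_empty, noncrossing_empty⟩

theorem NCset_empty : NCset (∅ : Finset (Fin n)) = {(∅ : Finset (Finset (Fin n)))} := by
  ext Q
  rw [mem_NCset, Finset.mem_singleton]
  constructor
  · intro hQ; exact partitionOn_empty_eq hQ.1
  · rintro rfl; exact NCOn_empty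

theorem NC_anti (A : Finset (Fin n)) : ∀ P ∈ NCset A, ∀ Q ∈ NCset A,
    Refines P Q → Refines Q P → P = Q := by
  intro P hP Q hQ h1 h2
  exact refines_antisymm (mem_NCset.1 hP).1 (mem_NCset.1 hQ).1 h1 h2

section C
variable (σ : Finset (Finset (Fin n)))
  (μNC : Finset (Fin n) → Finset (Finset (Fin n)) → Finset (Finset (Fin n)) → ℂ)

noncomputable def ncw (c : Finset (Finset (Fin n))) : ℂ :=
  ∏ W ∈ c, μNC W (restrictPart σ W) {W}

variable {σ μNC}

theorem muNC_refl (hμNC : ∀ A : Finset (Fin n), IsMobiusOn (NCset A) Refines (μNC A)) {A : Finset (Fin n)} {P : Finset (Finset (Fin n))} (hP : P ∈ NCset A) :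
    μNC A P P = 1 :=
  mobius_refl (hμNC A) (NC_anti A) hP (refines_refl P)

theorem restrict_NCOn (hσp : IsPartitionOn Finset.univ σ) (hσnc : Noncrossing σ)
    (A : Finset (Fin n)) : NCOn A (restrictPart σ A) :=
  ⟨by simpa using restrictPart_isPartition hσp (Finset.subset_univ A),
   restrictPart_noncrossing hσnc⟩

theorem KI_NC_base (hμNC : ∀ A : Finset (Fin n), IsMobiusOn (NCset A) Refines (μNC A)) :
    ((∑ c ∈ (NCset (∅ : Finset (Fin n))).filter
        (fun c => Refines (restrictPart σ ∅) c ∧ Refines c (∅ : Finset (Finset (Fin n)))),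
        ncw σ μNC c) = if restrictPart σ (∅ : Finset (Fin n)) = ∅ then 1 else 0)
    ∧ (μNC ∅ (restrictPart σ ∅) ∅ = ncw σ μNC ∅) := by
  have he : restrictPart σ (∅ : Finset (Fin n)) = ∅ := restrictPart_empty
  constructor
  · rw [NCset_empty, he]
    rw [Finset.filter_singleton]
    simp only [refines_refl, and_self, if_true]
    simp [ncw]
  · rw [he]
    have h1 : μNC ∅ (∅ : Finset (Finset (Fin n))) ∅ = 1 :=
      muNC_refl hμNC (by rw [NCset_empty]; simp)
    rw [h1]; simp [ncw]

-- blocks of τ' other than W₀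
theorem block_subset_sdiff {A W₀ C : Finset (Fin n)} {τ' : Finset (Finset (Fin n))}
    (hτp : IsPartitionOn A τ') (hW₀ : W₀ ∈ τ') (hC : C ∈ τ') (hne : C ≠ W₀) :
    C ⊆ A \ W₀ := by
  intro x hx
  rw [Finset.mem_sdiff]
  refine ⟨part_mem_S hτp hC hx, fun hxW => hne (part_disj hτp hC hW₀ hx hxW)⟩

theorem erase_isPartitionOn {A W₀ : Finset (Fin n)} {τ' : Finset (Finset (Fin n))}
    (hτp : IsPartitionOn A τ') (hW₀ : W₀ ∈ τ') :
    IsPartitionOn (A \ W₀) (τ'.erase W₀) := by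
  constructor
  · intro B hB
    obtain ⟨hne, hB⟩ := Finset.mem_erase.1 hB
    exact ⟨part_nonempty hτp hB, block_subset_sdiff hτp hW₀ hB hne⟩
  · intro x hx
    obtain ⟨hxA, hxW⟩ := Finset.mem_sdiff.1 hx
    obtain ⟨B, hB, hxB⟩ := exists_block hτp hxA
    have hne : B ≠ W₀ := fun he => hxW (he ▸ hxB)
    refine ⟨B, ⟨Finset.mem_erase.2 ⟨hne, hB⟩, hxB⟩, ?_⟩
    rintro C ⟨hC, hxC⟩
    exact part_disj hτp (Finset.mem_erase.1 hC).2 hB hxC hxB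

theorem restrictPart_block {A W₀ : Finset (Fin n)} {τ' : Finset (Finset (Fin n))}
    (hτp : IsPartitionOn A τ') (hW₀ : W₀ ∈ τ') : restrictPart τ' W₀ = {W₀} := by
  ext C
  rw [mem_restrictPart, Finset.mem_singleton]
  constructor
  · rintro ⟨⟨B, hB, rfl⟩, hne⟩
    obtain ⟨x, hx⟩ := hne
    have : B = W₀ := part_disj hτp hB hW₀ (mem_inter.1 hx).1 (mem_inter.1 hx).2
    rw [this, inter_self]
  · intro h
    subst h
    exact ⟨⟨C, hW₀, inter_self C⟩, part_nonempty hτp hW₀⟩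

theorem restrictPart_sdiff_block {A W₀ : Finset (Fin n)} {τ' : Finset (Finset (Fin n))}
    (hτp : IsPartitionOn A τ') (hW₀ : W₀ ∈ τ') :
    restrictPart τ' (A \ W₀) = τ'.erase W₀ := by
  ext C
  rw [mem_restrictPart, Finset.mem_erase]
  constructor
  · rintro ⟨⟨B, hB, rfl⟩, hne⟩
    by_cases hBW : B = W₀
    · subst hBW
      obtain ⟨x, hx⟩ := hne
      obtain ⟨h1, h2⟩ := mem_inter.1 hx
      exact absurd h1 (Finset.mem_sdiff.1 h2).2.elim
    · have hsub : B ⊆ A \ W₀ := block_subset_sdiff hτp hW₀ hB hBW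
      rw [inter_eq_left.2 hsub]
      exact ⟨hBW, hB⟩
  · rintro ⟨hne, hC⟩
    refine ⟨⟨C, hC, inter_eq_left.2 (block_subset_sdiff hτp hW₀ hC hne)⟩, part_nonempty hτp hC⟩

-- splitting restrictPart σ A when blocks don't straddle W₀ / A \ W₀
theorem restrictPart_split (hσp : IsPartitionOn Finset.univ σ) {A W₀ : Finset (Fin n)}
    (hW₀A : W₀ ⊆ A)
    (hns : ∀ T ∈ restrictPart σ A, T ⊆ W₀ ∨ T ⊆ A \ W₀) :
    restrictPart σ A = restrictPart σ W₀ ∪ restrictPart σ (A \ W₀) := by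
  have key : ∀ B ∈ σ, (B ∩ A).Nonempty → B ∩ A ⊆ W₀ → B ∩ W₀ = B ∩ A := by
    intro B hB hne h
    apply Finset.Subset.antisymm
    · intro x hx
      rcases hns _ (mem_restrictPart.2 ⟨⟨B, hB, rfl⟩, hne⟩) with h2 | h2
      · exact mem_inter.2 ⟨(mem_inter.1 hx).1, hW₀A (mem_inter.1 hx).2⟩
      · exact mem_inter.2 ⟨(mem_inter.1 hx).1, hW₀A (mem_inter.1 hx).2⟩
    · intro x hx
      exact mem_inter.2 ⟨(mem_inter.1 hx).1, h hx⟩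
  have key2 : ∀ B ∈ σ, (B ∩ A).Nonempty → B ∩ A ⊆ A \ W₀ → B ∩ (A \ W₀) = B ∩ A := by
    intro B hB hne h
    apply Finset.Subset.antisymm
    · exact inter_subset_inter subset_rfl Finset.sdiff_subset
    · intro x hx
      exact mem_inter.2 ⟨(mem_inter.1 hx).1, h hx⟩
  ext T
  rw [Finset.mem_union]
  constructor
  · intro hT
    obtain ⟨⟨B, hB, rfl⟩, hne⟩ := mem_restrictPart.1 hT
    rcases hns _ hT with h | h
    · exact Or.inl (mem_restrictPart.2 ⟨⟨B, hB, key B hB hne h⟩, hne⟩)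
    · exact Or.inr (mem_restrictPart.2 ⟨⟨B, hB, key2 B hB hne h⟩, hne⟩)
  · intro hT
    rcases hT with h | h
    · obtain ⟨⟨B, hB, rfl⟩, hne⟩ := mem_restrictPart.1 h
      have hsub : B ∩ W₀ ⊆ B ∩ A := inter_subset_inter subset_rfl hW₀A
      have hne2 : (B ∩ A).Nonempty := hne.mono hsub
      have hBA : (B ∩ A) ∈ restrictPart σ A := mem_restrictPart.2 ⟨⟨B, hB, rfl⟩, hne2⟩
      rcases hns _ hBA with h2 | h2
      · rw [key B hB hne2 h2]
        exact hBA
      · exfalso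
        obtain ⟨x, hx⟩ := hne
        exact (Finset.mem_sdiff.1 (h2 (hsub hx))).2 (mem_inter.1 hx).2
    · obtain ⟨⟨B, hB, rfl⟩, hne⟩ := mem_restrictPart.1 h
      have hsub : B ∩ (A \ W₀) ⊆ B ∩ A := inter_subset_inter subset_rfl Finset.sdiff_subset
      have hne2 : (B ∩ A).Nonempty := hne.mono hsub
      have hBA : (B ∩ A) ∈ restrictPart σ A := mem_restrictPart.2 ⟨⟨B, hB, rfl⟩, hne2⟩
      rcases hns _ hBA with h2 | h2
      · exfalso
        obtain ⟨x, hx⟩ := hne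
        exact (Finset.mem_sdiff.1 (mem_inter.1 hx).2).2 (h2 (hsub hx))
      · rw [key2 B hB hne2 h2]
        exact hBA

end C
end INCP
namespace INCP
open Finset
variable {n : ℕ} {σ : Finset (Finset (Fin n))}
  {μNC : Finset (Fin n) → Finset (Finset (Fin n)) → Finset (Finset (Fin n)) → ℂ}

theorem no_straddle {A W₀ : Finset (Fin n)} {τ' c : Finset (Finset (Fin n))}
    (hτp : IsPartitionOn A τ') (hW₀ : W₀ ∈ τ') (hcτ : Refines c τ') :
    ∀ B ∈ c, B ⊆ W₀ ∨ B ⊆ A \ W₀ := by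
  intro B hB
  obtain ⟨C, hC, hBC⟩ := hcτ B hB
  by_cases hCW : C = W₀
  · exact Or.inl (hCW ▸ hBC)
  · exact Or.inr (hBC.trans (block_subset_sdiff hτp hW₀ hC hCW))

theorem filter_sub_eq_restrict {W₀ A : Finset (Fin n)} {c : Finset (Finset (Fin n))}
    (hc : IsPartitionOn A c) (hns : ∀ B ∈ c, B ⊆ W₀ ∨ Disjoint B W₀) :
    c.filter (· ⊆ W₀) = restrictPart c W₀ := by
  rw [restrictPart_eq_filter hc]
  intro B hB hne
  rcases hns B hB with h | h
  · exact h
  · exfalso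
    obtain ⟨x, hx⟩ := hne
    exact (Finset.disjoint_left.1 h) (mem_inter.1 hx).1 (mem_inter.1 hx).2

theorem C_split (hσp : IsPartitionOn Finset.univ σ)
    {A W₀ : Finset (Fin n)} {τ' : Finset (Finset (Fin n))}
    (hτ : NCOn A τ') (hW₀ : W₀ ∈ τ')
    (hguard : Refines (restrictPart σ A) τ') :
    (∑ c ∈ (NCset A).filter (fun c => Refines (restrictPart σ A) c ∧ Refines c τ'), ncw σ μNC c)
    = (∑ d ∈ (NCset W₀).filter
          (fun d => Refines (restrictPart σ W₀) d ∧ Refines d ({W₀} : Finset (Finset (Fin n)))),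
        ncw σ μNC d) *
      (∑ e ∈ (NCset (A \ W₀)).filter
          (fun e => Refines (restrictPart σ (A \ W₀)) e ∧ Refines e (τ'.erase W₀)),
        ncw σ μNC e) := by
  classical
  have hτp := hτ.1
  have hW₀A : W₀ ⊆ A := (hτp.1 W₀ hW₀).2
  rw [Finset.sum_mul_sum, ← Finset.sum_product']
  refine Finset.sum_nbij' (fun c => (c.filter (· ⊆ W₀), c.filter (fun B => B ⊆ A \ W₀)))
    (fun p => p.1 ∪ p.2) ?_ ?_ ?_ ?_ ?_
  -- (1) forward map lands in product set
  · intro c hc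
    obtain ⟨hcNC, hσc, hcτ⟩ := Finset.mem_filter.1 hc
    have hcNC' := mem_NCset.1 hcNC
    have hstr := no_straddle hτp hW₀ hcτ
    have hdisj : ∀ B ∈ c, B ⊆ W₀ ∨ Disjoint B W₀ := by
      intro B hB
      rcases hstr B hB with h | h
      · exact Or.inl h
      · exact Or.inr (Finset.disjoint_left.2 fun x hx hxW => (Finset.mem_sdiff.1 (h hx)).2 hxW)
    have hdisj2 : ∀ B ∈ c, B ⊆ A \ W₀ ∨ Disjoint B (A \ W₀) := by
      intro B hB
      rcases hstr B hB with h | h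
      · exact Or.inr (Finset.disjoint_left.2 fun x hx hxW => (Finset.mem_sdiff.1 hxW).2 (h hx))
      · exact Or.inl h
    have e1 : c.filter (· ⊆ W₀) = restrictPart c W₀ := filter_sub_eq_restrict hcNC'.1 hdisj
    have e2 : c.filter (fun B => B ⊆ A \ W₀) = restrictPart c (A \ W₀) :=
      filter_sub_eq_restrict hcNC'.1 hdisj2
    rw [Finset.mem_product]
    constructor
    · rw [Finset.mem_filter, e1]
      refine ⟨mem_NCset.2 ⟨restrictPart_isPartition hcNC'.1 hW₀A, restrictPart_noncrossing hcNC'.2⟩, ?_, ?_⟩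
      · rw [← restrictPart_restrictPart (P := σ) hW₀A]
        exact refines_restrictPart hσc
      · refine refines_top ?_
        intro B hB
        obtain ⟨⟨B', _, rfl⟩, _⟩ := mem_restrictPart.1 hB
        exact inter_subset_right
    · rw [Finset.mem_filter, e2]
      refine ⟨mem_NCset.2 ⟨restrictPart_isPartition hcNC'.1 Finset.sdiff_subset,
        restrictPart_noncrossing hcNC'.2⟩, ?_, ?_⟩
      · rw [← restrictPart_restrictPart (P := σ) (Finset.sdiff_subset : A \ W₀ ⊆ A)]
        exact refines_restrictPart hσc
      · -- restrictPart c (A \ W₀) refines τ'.erase W₀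
        rw [← e2]
        intro B hB
        obtain ⟨hBc, hBW⟩ := Finset.mem_filter.1 hB
        obtain ⟨C, hC, hBC⟩ := hcτ B hBc
        have hCne : C ≠ W₀ := by
          rintro rfl
          obtain ⟨x, hx⟩ := part_nonempty hcNC'.1 hBc
          exact (Finset.mem_sdiff.1 (hBW hx)).2 (hBC hx)
        exact ⟨C, Finset.mem_erase.2 ⟨hCne, hC⟩, hBC⟩
  -- (2) backward map lands in filter set
  · intro p hp
    obtain ⟨hp1, hp2⟩ := Finset.mem_product.1 hp
    obtain ⟨hdNC, hσd, _⟩ := Finset.mem_filter.1 hp1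
    obtain ⟨heNC, hσe, heτ⟩ := Finset.mem_filter.1 hp2
    have hd := mem_NCset.1 hdNC
    have he := mem_NCset.1 heNC
    rw [Finset.mem_filter]
    refine ⟨mem_NCset.2 ⟨?_, ?_⟩, ?_, ?_⟩
    · have := isPartitionOn_union hd.1 he.1 (Finset.disjoint_sdiff)
      rwa [Finset.union_sdiff_of_subset hW₀A] at this
    · -- noncrossing of union
      rintro V hV W hW hne ⟨s₁, r₁, s₂, r₂, h1, h2, h3, h4, h5, h6, h7⟩
      rcases Finset.mem_union.1 hV with hVd | hVe <;> rcases Finset.mem_union.1 hW with hWd | hWe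
      · exact hd.2 V hVd W hWd hne ⟨s₁, r₁, s₂, r₂, h1, h2, h3, h4, h5, h6, h7⟩
      · -- V ∈ d (⊆ W₀), W ∈ e (⊆ C ∈ τ'.erase W₀)
        obtain ⟨C, hC, hWC⟩ := heτ W hWe
        have hCe := Finset.mem_erase.1 hC
        have hVW₀ : V ⊆ W₀ := (hd.1.1 V hVd).2
        exact hτ.2 W₀ hW₀ C hCe.2 (Ne.symm hCe.1)
          ⟨s₁, r₁, s₂, r₂, hVW₀ h1, hVW₀ h2, hWC h3, hWC h4, h5, h6, h7⟩
      · obtain ⟨C, hC, hVC⟩ := heτ V hVe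
        have hCe := Finset.mem_erase.1 hC
        have hWW₀ : W ⊆ W₀ := (hd.1.1 W hWd).2
        exact hτ.2 C hCe.2 W₀ hW₀ hCe.1
          ⟨s₁, r₁, s₂, r₂, hVC h1, hVC h2, hWW₀ h3, hWW₀ h4, h5, h6, h7⟩
      · exact he.2 V hVe W hWe hne ⟨s₁, r₁, s₂, r₂, h1, h2, h3, h4, h5, h6, h7⟩
    · -- σ|A refines d ∪ e
      intro T hT
      obtain ⟨⟨B, hB, rfl⟩, hne⟩ := mem_restrictPart.1 hT
      obtain ⟨C, hC, hTC⟩ := hguard _ hT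
      by_cases hCW : C = W₀
      · subst hCW
        have hBW : B ∩ C = B ∩ A := by
          apply Finset.Subset.antisymm (inter_subset_inter subset_rfl (hτp.1 C hW₀).2)
          intro x hx
          exact mem_inter.2 ⟨(mem_inter.1 hx).1, hTC hx⟩
        have hmem : B ∩ C ∈ restrictPart σ C := mem_restrictPart.2 ⟨⟨B, hB, rfl⟩, by rwa [hBW]⟩
        obtain ⟨D, hD, hBD⟩ := hσd _ hmem
        exact ⟨D, Finset.mem_union_left _ hD, by rw [← hBW]; exact hBD⟩
      · have hCsub : C ⊆ A \ W₀ := block_subset_sdiff hτp hW₀ hC hCW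
        have hBW : B ∩ (A \ W₀) = B ∩ A := by
          apply Finset.Subset.antisymm (inter_subset_inter subset_rfl Finset.sdiff_subset)
          intro x hx
          exact mem_inter.2 ⟨(mem_inter.1 hx).1, hCsub (hTC hx)⟩
        have hmem : B ∩ (A \ W₀) ∈ restrictPart σ (A \ W₀) :=
          mem_restrictPart.2 ⟨⟨B, hB, rfl⟩, by rwa [hBW]⟩
        obtain ⟨D, hD, hBD⟩ := hσe _ hmem
        exact ⟨D, Finset.mem_union_right _ hD, by rw [← hBW]; exact hBD⟩
    · -- d ∪ e refines τ'
      intro B hB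
      rcases Finset.mem_union.1 hB with h | h
      · exact ⟨W₀, hW₀, (hd.1.1 B h).2⟩
      · obtain ⟨C, hC, hBC⟩ := heτ B h
        exact ⟨C, (Finset.mem_erase.1 hC).2, hBC⟩
  -- (3) left inverse
  · intro c hc
    obtain ⟨hcNC, hσc, hcτ⟩ := Finset.mem_filter.1 hc
    have hcNC' := mem_NCset.1 hcNC
    have hstr := no_straddle hτp hW₀ hcτ
    dsimp only
    ext B
    rw [Finset.mem_union, Finset.mem_filter, Finset.mem_filter]
    constructor
    · rintro (⟨h, _⟩ | ⟨h, _⟩) <;> exact h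
    · intro hB
      rcases hstr B hB with h | h
      · exact Or.inl ⟨hB, h⟩
      · exact Or.inr ⟨hB, h⟩
  -- (4) right inverse
  · intro p hp
    obtain ⟨hp1, hp2⟩ := Finset.mem_product.1 hp
    obtain ⟨hdNC, _, _⟩ := Finset.mem_filter.1 hp1
    obtain ⟨heNC, _, _⟩ := Finset.mem_filter.1 hp2
    have hd := mem_NCset.1 hdNC
    have he := mem_NCset.1 heNC
    have hdsub : ∀ B ∈ p.1, B ⊆ W₀ := fun B hB => (hd.1.1 B hB).2
    have hesub : ∀ B ∈ p.2, B ⊆ A \ W₀ := fun B hB => (he.1.1 B hB).2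
    have hd' : ∀ B ∈ p.2, ¬ B ⊆ W₀ := by
      intro B hB hsub
      obtain ⟨x, hx⟩ := part_nonempty he.1 hB
      exact (Finset.mem_sdiff.1 (hesub B hB hx)).2 (hsub hx)
    have he' : ∀ B ∈ p.1, ¬ B ⊆ A \ W₀ := by
      intro B hB hsub
      obtain ⟨x, hx⟩ := part_nonempty hd.1 hB
      exact (Finset.mem_sdiff.1 (hsub hx)).2 (hdsub B hB hx)
    have e1 : (p.1 ∪ p.2).filter (· ⊆ W₀) = p.1 := by
      ext B
      rw [Finset.mem_filter, Finset.mem_union]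
      constructor
      · rintro ⟨h | h, hsub⟩
        · exact h
        · exact absurd hsub (hd' B h)
      · intro h
        exact ⟨Or.inl h, hdsub B h⟩
    have e2 : (p.1 ∪ p.2).filter (fun B => B ⊆ A \ W₀) = p.2 := by
      ext B
      rw [Finset.mem_filter, Finset.mem_union]
      constructor
      · rintro ⟨h | h, hsub⟩
        · exact absurd hsub (he' B h)
        · exact h
      · intro h
        exact ⟨Or.inr h, hesub B h⟩
    rw [e1, e2]
  -- (5) weights
  · intro c hc
    obtain ⟨hcNC, hσc, hcτ⟩ := Finset.mem_filter.1 hc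
    have hcNC' := mem_NCset.1 hcNC
    have hstr := no_straddle hτp hW₀ hcτ
    have hcup : c.filter (· ⊆ W₀) ∪ c.filter (fun B => B ⊆ A \ W₀) = c := by
      ext B
      rw [Finset.mem_union, Finset.mem_filter, Finset.mem_filter]
      constructor
      · rintro (⟨h, _⟩ | ⟨h, _⟩) <;> exact h
      · intro hB
        rcases hstr B hB with h | h
        · exact Or.inl ⟨hB, h⟩
        · exact Or.inr ⟨hB, h⟩
    have hdisjf : Disjoint (c.filter (· ⊆ W₀)) (c.filter (fun B => B ⊆ A \ W₀)) := by
      rw [Finset.disjoint_left]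
      intro B h1 h2
      obtain ⟨hBc, hs1⟩ := Finset.mem_filter.1 h1
      obtain ⟨_, hs2⟩ := Finset.mem_filter.1 h2
      obtain ⟨x, hx⟩ := part_nonempty hcNC'.1 hBc
      exact (Finset.mem_sdiff.1 (hs2 hx)).2 (hs1 hx)
    dsimp only
    show ncw σ μNC c = ncw σ μNC _ * ncw σ μNC _
    unfold ncw
    rw [← Finset.prod_union hdisjf, hcup]
end INCP
namespace INCP
open Finset
variable {n : ℕ} {σ : Finset (Finset (Fin n))}
  {μNC : Finset (Fin n) → Finset (Finset (Fin n)) → Finset (Finset (Fin n)) → ℂ}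

theorem delta_combine (hσp : IsPartitionOn Finset.univ σ)
    {A W₀ : Finset (Fin n)} {τ' : Finset (Finset (Fin n))}
    (hτ : NCOn A τ') (hW₀ : W₀ ∈ τ')
    (hguard : Refines (restrictPart σ A) τ') :
    ((if restrictPart σ W₀ = {W₀} then (1:ℂ) else 0) *
      (if restrictPart σ (A \ W₀) = τ'.erase W₀ then (1:ℂ) else 0))
    = if restrictPart σ A = τ' then 1 else 0 := by
  have hτp := hτ.1
  have hW₀A : W₀ ⊆ A := (hτp.1 W₀ hW₀).2
  have hns : ∀ T ∈ restrictPart σ A, T ⊆ W₀ ∨ T ⊆ A \ W₀ := by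
    intro T hT
    obtain ⟨C, hC, hTC⟩ := hguard T hT
    by_cases hCW : C = W₀
    · exact Or.inl (hCW ▸ hTC)
    · exact Or.inr (hTC.trans (block_subset_sdiff hτp hW₀ hC hCW))
  have hsplit := restrictPart_split hσp hW₀A hns
  by_cases h : restrictPart σ A = τ'
  · have h1 : restrictPart σ W₀ = {W₀} := by
      rw [← restrictPart_restrictPart (P := σ) hW₀A, h, restrictPart_block hτp hW₀]
    have h2 : restrictPart σ (A \ W₀) = τ'.erase W₀ := by
      rw [← restrictPart_restrictPart (P := σ) (Finset.sdiff_subset : A \ W₀ ⊆ A), h,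
        restrictPart_sdiff_block hτp hW₀]
    rw [h1, h2]
    simp [h]
  · rw [if_neg h]
    by_cases h1 : restrictPart σ W₀ = {W₀}
    · by_cases h2 : restrictPart σ (A \ W₀) = τ'.erase W₀
      · exfalso
        apply h
        rw [hsplit, h1, h2, ← Finset.insert_eq, Finset.insert_erase hW₀]
      · simp [h2]
    · simp [h1]

theorem empty_part_ground {A : Finset (Fin n)} {P : Finset (Finset (Fin n))}
    (hP : IsPartitionOn A P) (h : P = ∅) : A = ∅ := by
  subst h
  ext x
  simp only [Finset.notMem_empty, iff_false]
  intro hx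
  obtain ⟨B, hB, _⟩ := exists_block hP hx
  simp at hB

theorem KI_NC_master (hσp : IsPartitionOn Finset.univ σ) (hσnc : Noncrossing σ)
    (hμNC : ∀ A : Finset (Fin n), IsMobiusOn (NCset A) Refines (μNC A)) :
    ∀ N (A : Finset (Fin n)), A.card ≤ N → ∀ τ' ∈ NCset A,
      ((∑ c ∈ (NCset A).filter (fun c => Refines (restrictPart σ A) c ∧ Refines c τ'),
          ncw σ μNC c)
        = if restrictPart σ A = τ' then 1 else 0)
      ∧ (Refines (restrictPart σ A) τ' → μNC A (restrictPart σ A) τ' = ncw σ μNC τ') := by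
  intro N
  induction N with
  | zero =>
    intro A hA τ' hτ'
    have hA0 : A = ∅ := Finset.card_eq_zero.1 (le_antisymm hA (Nat.zero_le _))
    subst hA0
    have hτ0 : τ' = ∅ := partitionOn_empty_eq (mem_NCset.1 hτ').1
    subst hτ0
    have base := KI_NC_base (σ := σ) hμNC
    exact ⟨base.1, fun _ => base.2⟩
  | succ N ih =>
    intro A hA τ' hτ'mem
    by_cases hA0 : A = ∅
    · subst hA0
      have hτ0 : τ' = ∅ := partitionOn_empty_eq (mem_NCset.1 hτ'mem).1
      subst hτ0
      have base := KI_NC_base (σ := σ) hμNC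
      exact ⟨base.1, fun _ => base.2⟩
    have hσA : restrictPart σ A ∈ NCset A := mem_NCset.2 (restrict_NCOn hσp hσnc A)
    -- Step 1 : sum identity for any non-top τ''
    have step1 : ∀ τ'' ∈ NCset A, τ'' ≠ ({A} : Finset (Finset (Fin n))) →
        (∑ c ∈ (NCset A).filter (fun c => Refines (restrictPart σ A) c ∧ Refines c τ''),
          ncw σ μNC c)
        = if restrictPart σ A = τ'' then 1 else 0 := by
      intro τ'' hτ''mem hne
      have hτ'' := mem_NCset.1 hτ''mem
      by_cases hguard : Refines (restrictPart σ A) τ''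
      · have hτne : τ''.Nonempty := by
          rcases Finset.eq_empty_or_nonempty τ'' with h | h
          · exact absurd (empty_part_ground hτ''.1 h) hA0
          · exact h
        obtain ⟨W₀, hW₀⟩ := hτne
        have hWA : W₀ ≠ A := by
          rintro rfl
          apply hne
          ext B
          rw [Finset.mem_singleton]
          constructor
          · intro hB
            obtain ⟨x, hx⟩ := part_nonempty hτ''.1 hB
            exact part_disj hτ''.1 hB hW₀ hx ((hτ''.1.1 B hB).2 hx)
          · rintro rfl
            exact hW₀
        have hW₀sub : W₀ ⊆ A := (hτ''.1.1 W₀ hW₀).2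
        have hW₀ne : W₀.Nonempty := part_nonempty hτ''.1 hW₀
        have hssub : W₀ ⊂ A := Finset.ssubset_iff_subset_ne.2 ⟨hW₀sub, hWA⟩
        have hcard1 : W₀.card ≤ N := by
          have := Finset.card_lt_card hssub
          omega
        have hcard2 : (A \ W₀).card ≤ N := by
          have h1 : (A \ W₀).card = A.card - W₀.card := Finset.card_sdiff_of_subset hW₀sub
          have h2 : 0 < W₀.card := Finset.card_pos.2 hW₀ne
          omega
        rw [C_split hσp hτ'' hW₀ hguard]
        have i1 := (ih W₀ hcard1 {W₀} (mem_NCset.2 (NCOn_top hW₀ne))).1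
        have i2 := (ih (A \ W₀) hcard2 (τ''.erase W₀) (mem_NCset.2 ⟨erase_isPartitionOn hτ''.1 hW₀,
          noncrossing_of_subset (Finset.erase_subset _ _) hτ''.2⟩)).1
        rw [i1, i2]
        exact delta_combine hσp hτ'' hW₀ hguard
      · have hfe : (NCset A).filter
            (fun c => Refines (restrictPart σ A) c ∧ Refines c τ'') = ∅ := by
          rw [Finset.filter_eq_empty_iff]
          rintro c _ ⟨h1, h2⟩
          exact hguard (refines_trans h1 h2)
        rw [hfe, Finset.sum_empty, if_neg]
        rintro he
        exact hguard (he ▸ refines_refl _)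
    -- Step 2 : pointwise identity
    have step2 : ∀ τ'' ∈ NCset A, Refines (restrictPart σ A) τ'' →
        μNC A (restrictPart σ A) τ'' = ncw σ μNC τ'' := by
      have inner : ∀ K, ∀ b ∈ NCset A, Refines (restrictPart σ A) b →
          ((NCset A).filter (fun c => Refines (restrictPart σ A) c ∧ Refines c b)).card ≤ K →
          μNC A (restrictPart σ A) b = ncw σ μNC b := by
        intro K
        induction K with
        | zero =>
          intro b hb hab hcard
          exfalso
          have hmem : b ∈ (NCset A).filter
              (fun c => Refines (restrictPart σ A) c ∧ Refines c b) :=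
            Finset.mem_filter.2 ⟨hb, hab, refines_refl b⟩
          have := Finset.card_pos.2 ⟨b, hmem⟩
          omega
        | succ K ihK =>
          intro b hb hab hcard
          by_cases hbtop : b = ({A} : Finset (Finset (Fin n)))
          · subst hbtop
            unfold ncw
            rw [Finset.prod_singleton]
          · have hbmem : b ∈ (NCset A).filter
                (fun c => Refines (restrictPart σ A) c ∧ Refines c b) :=
              Finset.mem_filter.2 ⟨hb, hab, refines_refl b⟩
            have h1 := (hμNC A _ hσA b hb hab).1
            rw [← Finset.add_sum_erase _ _ hbmem] at h1
            have hkey : ∀ c ∈ ((NCset A).filter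
                (fun c => Refines (restrictPart σ A) c ∧ Refines c b)).erase b,
                μNC A (restrictPart σ A) c = ncw σ μNC c := by
              intro c hc
              obtain ⟨hcb, hcmem⟩ := Finset.mem_erase.1 hc
              obtain ⟨hcS, hac, hcble⟩ := Finset.mem_filter.1 hcmem
              apply ihK c hcS hac
              have hsub : (NCset A).filter
                  (fun d => Refines (restrictPart σ A) d ∧ Refines d c) ⊆
                  ((NCset A).filter
                    (fun d => Refines (restrictPart σ A) d ∧ Refines d b)).erase b := by
                intro d hd
                obtain ⟨hdS, h3, h4⟩ := Finset.mem_filter.1 hd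
                refine Finset.mem_erase.2 ⟨?_,
                  Finset.mem_filter.2 ⟨hdS, h3, refines_trans h4 hcble⟩⟩
                rintro rfl
                exact hcb (NC_anti A c hcS d hdS hcble h4)
              have hle := Finset.card_le_card hsub
              have herase := Finset.card_erase_of_mem hbmem
              have hpos := Finset.card_pos.2 ⟨b, hbmem⟩
              omega
            rw [Finset.sum_congr rfl hkey] at h1
            have h2 := step1 b hb hbtop
            rw [← Finset.add_sum_erase _ _ hbmem] at h2
            refine add_right_cancel (a := μNC A (restrictPart σ A) b)
              (b := ∑ x ∈ ((NCset A).filter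
                (fun c => Refines (restrictPart σ A) c ∧ Refines c b)).erase b, ncw σ μNC x)
              (c := ncw σ μNC b) ?_
            by_cases hde : restrictPart σ A = b
            · rw [if_pos hde] at h1 h2
              rw [h1, h2]
            · rw [if_neg hde] at h1 h2
              rw [h1, h2]
      intro τ'' hτ'' hg
      exact inner _ τ'' hτ'' hg le_rfl
    constructor
    · by_cases hguard : Refines (restrictPart σ A) τ'
      · have h1 := (hμNC A _ hσA τ' hτ'mem hguard).1
        rw [Finset.sum_congr rfl (fun c hc => step2 c (Finset.mem_filter.1 hc).1
          (Finset.mem_filter.1 hc).2.1)] at h1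
        by_cases hde : restrictPart σ A = τ'
        · rw [if_pos hde] at h1 ⊢
          exact h1
        · rw [if_neg hde] at h1 ⊢
          exact h1
      · have hfe : (NCset A).filter
            (fun c => Refines (restrictPart σ A) c ∧ Refines c τ') = ∅ := by
          rw [Finset.filter_eq_empty_iff]
          rintro c _ ⟨h1, h2⟩
          exact hguard (refines_trans h1 h2)
        rw [hfe, Finset.sum_empty, if_neg]
        rintro he
        exact hguard (he ▸ refines_refl _)
    · exact step2 τ' hτ'mem
end INCP
namespace INCP
open Finset

theorem surrounded {α : Type*} [LinearOrder α] {S : Finset α} {P : Finset (Finset α)}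
    (hP : IsPartitionOn S P) (hnc : Noncrossing P)
    {B W : Finset α} {s t x : α} (hB : B ∈ P) (hW : W ∈ P) (hne : W ≠ B)
    (hs : s ∈ B) (ht : t ∈ B) (hx : x ∈ W) (h1 : s < x) (h2 : x < t) :
    ∀ w ∈ W, s < w ∧ w < t := by
  intro w hw
  constructor
  · by_contra h
    push_neg at h
    have hws : w < s := by
      rcases lt_or_eq_of_le h with h' | h'
      · exact h'
      · exact absurd (part_disj hP hW hB (h' ▸ hw) hs) hne
    exact hnc W hW B hB hne ⟨w, s, x, t, hw, hx, hs, ht, hws, h1, h2⟩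
  · by_contra h
    push_neg at h
    have htw : t < w := by
      rcases lt_or_eq_of_le h with h' | h'
      · exact h'
      · exact absurd (part_disj hP hW hB (h' ▸ hw) ht) hne
    exact hnc B hB W hW (Ne.symm hne) ⟨s, x, t, w, hs, ht, hx, hw, h1, h2, htw⟩

theorem chi_false_of_between {α : Type*} [LinearOrder α] {χ : α → Bool}
    {S : Finset α} {P : Finset (Finset α)} (hP : INCOn S χ P)
    {B : Finset α} {s t x : α}
    (hB : B ∈ P) (hs : s ∈ B) (ht : t ∈ B) (hxS : x ∈ S) (hxB : x ∉ B)
    (h1 : s < x) (h2 : x < t) : χ x = false := by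
  obtain ⟨W, hW, hxW⟩ := exists_block hP.1 hxS
  have hne : W ≠ B := fun he => hxB (he ▸ hxW)
  have hsur := surrounded hP.1 hP.2.1 hB hW hne hs ht hxW h1 h2
  exact hP.2.2 W hW ⟨B, hB, Ne.symm hne, s, hs, t, ht, hsur⟩ x hxW

theorem mem_block_of_between {α : Type*} [LinearOrder α] {χ : α → Bool}
    {S : Finset α} {P : Finset (Finset α)} (hP : INCOn S χ P)
    {B : Finset α} {s t x : α}
    (hB : B ∈ P) (hs : s ∈ B) (ht : t ∈ B) (hxS : x ∈ S) (hχ : χ x = true)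
    (h1 : s < x) (h2 : x < t) : x ∈ B := by
  by_contra hxB
  have := chi_false_of_between hP hB hs ht hxS hxB h1 h2
  rw [this] at hχ
  exact Bool.false_ne_true hχ

theorem INCOn_of_subset {α : Type*} [LinearOrder α] {χ : α → Bool}
    {S T : Finset α} {P Q : Finset (Finset α)} (hP : INCOn S χ P)
    (hQsub : Q ⊆ P) (hQpart : IsPartitionOn T Q) : INCOn T χ Q := by
  refine ⟨hQpart, noncrossing_of_subset hQsub hP.2.1, ?_⟩
  intro V hV hinner k hk
  obtain ⟨W, hW, hne, s, hsW, t, htW, hsur⟩ := hinner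
  exact hP.2.2 V (hQsub hV) ⟨W, hQsub hW, hne, s, hsW, t, htW, hsur⟩ k hk

theorem INCOn_empty {α : Type*} [LinearOrder α] {χ : α → Bool} :
    INCOn (∅ : Finset α) χ (∅ : Finset (Finset α)) := by
  refine ⟨isPartitionOn_empty, noncrossing_empty, ?_⟩
  intro V hV; simp at hV

theorem INCset_empty {n : ℕ} {χ : Fin n → Bool} :
    INCset (∅ : Finset (Fin n)) χ = {(∅ : Finset (Finset (Fin n)))} := by
  ext Q
  rw [mem_INCset, Finset.mem_singleton]
  constructor
  · intro hQ; exact partitionOn_empty_eq hQ.1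
  · rintro rfl; exact INCOn_empty

theorem INCset_singleton {n : ℕ} {χ : Fin n → Bool} {x : Fin n} :
    INCset ({x} : Finset (Fin n)) χ = {({({x} : Finset (Fin n))} : Finset (Finset (Fin n)))} := by
  ext Q
  rw [mem_INCset, Finset.mem_singleton]
  constructor
  · intro hQ; exact partitionOn_singleton_eq hQ.1
  · rintro rfl
    refine ⟨isPartitionOn_top (Finset.singleton_nonempty x), noncrossing_singleton, ?_⟩
    rintro V hV ⟨W, hW, hne, _⟩
    rw [Finset.mem_singleton] at hV hW
    exact absurd (hW.trans hV.symm) hne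

end INCP
namespace INCP
open Finset
section D
variable {n m : ℕ} {χ : Fin n → Bool} {l : Fin (m + 1) → Fin n}
  {σ : Finset (Finset (Fin n))}
  {μNC : Finset (Fin n) → Finset (Finset (Fin n)) → Finset (Finset (Fin n)) → ℂ}

noncomputable def blockw (l : Fin (m + 1) → Fin n)
    (μNC : Finset (Fin n) → Finset (Finset (Fin n)) → Finset (Finset (Fin n)) → ℂ)
    (σ : Finset (Finset (Fin n))) (W : Finset (Fin n)) : ℂ :=
  ∏ i : Fin m, μNC (W ∩ Finset.Icc (l i.castSucc) (l i.succ))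
    (restrictPart σ (W ∩ Finset.Icc (l i.castSucc) (l i.succ)))
    (if (W ∩ Finset.Icc (l i.castSucc) (l i.succ)).Nonempty
      then {W ∩ Finset.Icc (l i.castSucc) (l i.succ)} else ∅)

noncomputable def wt (l : Fin (m + 1) → Fin n)
    (μNC : Finset (Fin n) → Finset (Finset (Fin n)) → Finset (Finset (Fin n)) → ℂ)
    (σ : Finset (Finset (Fin n))) (c : Finset (Finset (Fin n))) : ℂ :=
  ∏ W ∈ c, blockw l μNC σ W

theorem muNC_triv_empty (hμNC : ∀ A : Finset (Fin n), IsMobiusOn (NCset A) Refines (μNC A)) :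
    μNC ∅ (∅ : Finset (Finset (Fin n))) ∅ = 1 :=
  muNC_refl hμNC (by rw [NCset_empty]; simp)

theorem muNC_triv_singleton (hμNC : ∀ A : Finset (Fin n), IsMobiusOn (NCset A) Refines (μNC A))
    (x : Fin n) : μNC {x} ({({x} : Finset (Fin n))} : Finset (Finset (Fin n))) {({x} : Finset (Fin n))} = 1 :=
  muNC_refl hμNC (mem_NCset.2 (NCOn_top (Finset.singleton_nonempty x)))

theorem factor_triv (hσp : IsPartitionOn Finset.univ σ)
    (hμNC : ∀ A : Finset (Fin n), IsMobiusOn (NCset A) Refines (μNC A))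
    {A : Finset (Fin n)} {x : Fin n} (h : A ⊆ {x}) :
    μNC A (restrictPart σ A) (if A.Nonempty then ({A} : Finset (Finset (Fin n))) else ∅) = 1 := by
  rcases Finset.subset_singleton_iff.1 h with rfl | rfl
  · rw [if_neg (by simp), restrictPart_empty]
    exact muNC_triv_empty hμNC
  · rw [if_pos (Finset.singleton_nonempty x), restrictPart_singleton hσp (Finset.mem_univ x)]
    exact muNC_triv_singleton hμNC x

theorem blockw_interval (hσp : IsPartitionOn Finset.univ σ)
    (hμNC : ∀ A : Finset (Fin n), IsMobiusOn (NCset A) Refines (μNC A))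
    (hmono : StrictMono l) {W : Finset (Fin n)} {i : Fin m} (hW : W.Nonempty)
    (hsub : W ⊆ Finset.Icc (l i.castSucc) (l i.succ)) :
    blockw l μNC σ W = μNC W (restrictPart σ W) {W} := by
  unfold blockw
  rw [Finset.prod_eq_single_of_mem i (Finset.mem_univ i)]
  · rw [inter_eq_left.2 hsub, if_pos hW]
  · intro i' _ hne
    rcases lt_or_gt_of_ne hne with hlt | hlt
    · -- i' < i : W ∩ I_{i'} ⊆ {l i.castSucc}
      refine factor_triv hσp hμNC (x := l i.castSucc) ?_
      intro x hx
      obtain ⟨hxW, hxI⟩ := mem_inter.1 hx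
      have h1 : l i.castSucc ≤ x := (Finset.mem_Icc.1 (hsub hxW)).1
      have h2 : x ≤ l i'.succ := (Finset.mem_Icc.1 hxI).2
      have h3 : l i'.succ ≤ l i.castSucc := by
        apply hmono.le_iff_le.2
        rw [Fin.le_def]
        simp only [Fin.val_succ, Fin.coe_castSucc]
        have := Fin.lt_def.1 hlt
        omega
      rw [Finset.mem_singleton]
      exact le_antisymm (h2.trans h3) h1
    · -- i < i' : W ∩ I_{i'} ⊆ {l i.succ}
      refine factor_triv hσp hμNC (x := l i.succ) ?_
      intro x hx
      obtain ⟨hxW, hxI⟩ := mem_inter.1 hx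
      have h1 : x ≤ l i.succ := (Finset.mem_Icc.1 (hsub hxW)).2
      have h2 : l i'.castSucc ≤ x := (Finset.mem_Icc.1 hxI).1
      have h3 : l i.succ ≤ l i'.castSucc := by
        apply hmono.le_iff_le.2
        rw [Fin.le_def]
        simp only [Fin.val_succ, Fin.coe_castSucc]
        have := Fin.lt_def.1 hlt
        omega
      rw [Finset.mem_singleton]
      exact le_antisymm h1 (h3.trans h2)

theorem blockw_mult (hσp : IsPartitionOn Finset.univ σ)
    (hμNC : ∀ A : Finset (Fin n), IsMobiusOn (NCset A) Refines (μNC A))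
    (hmono : StrictMono l) {B₁ B₂ : Finset (Fin n)} {i : Fin m}
    (h1 : B₁ ⊆ Finset.Icc (l 0) (l i.castSucc)) (h2 : B₂ ⊆ Finset.Icc (l i.castSucc) (l i.succ))
    (hp1 : l i.castSucc ∈ B₁) (hp2 : l i.castSucc ∈ B₂) :
    blockw l μNC σ (B₁ ∪ B₂) = blockw l μNC σ B₁ * blockw l μNC σ B₂ := by
  unfold blockw
  rw [← Finset.prod_mul_distrib]
  apply Finset.prod_congr rfl
  intro i' _
  rcases lt_or_ge i'.castSucc i.castSucc with hlt | hle
  · -- i' ≤ i - 1 roughly : B₂ ∩ I_{i'} ⊆ {l i.castSucc} and union ∩ I = B₁ ∩ I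
    have hsub : B₂ ∩ Finset.Icc (l i'.castSucc) (l i'.succ) ⊆ {l i.castSucc} := by
      intro x hx
      obtain ⟨hxB, hxI⟩ := mem_inter.1 hx
      have ha : l i.castSucc ≤ x := (Finset.mem_Icc.1 (h2 hxB)).1
      have hb : x ≤ l i'.succ := (Finset.mem_Icc.1 hxI).2
      have hc : l i'.succ ≤ l i.castSucc := by
        apply hmono.le_iff_le.2
        rw [Fin.le_def]
        simp only [Fin.val_succ, Fin.coe_castSucc]
        have := Fin.lt_def.1 hlt
        simp only [Fin.coe_castSucc] at this
        omega
      rw [Finset.mem_singleton]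
      exact le_antisymm (hb.trans hc) ha
    have hunion : (B₁ ∪ B₂) ∩ Finset.Icc (l i'.castSucc) (l i'.succ)
        = B₁ ∩ Finset.Icc (l i'.castSucc) (l i'.succ) := by
      apply Finset.Subset.antisymm
      · intro x hx
        obtain ⟨hxB, hxI⟩ := mem_inter.1 hx
        rcases Finset.mem_union.1 hxB with h | h
        · exact mem_inter.2 ⟨h, hxI⟩
        · have : x = l i.castSucc := Finset.mem_singleton.1 (hsub (mem_inter.2 ⟨h, hxI⟩))
          subst this
          exact mem_inter.2 ⟨hp1, hxI⟩
      · exact inter_subset_inter subset_union_left subset_rfl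
    rw [hunion, factor_triv hσp hμNC hsub, mul_one]
  · -- i ≤ i' : B₁ ∩ I_{i'} ⊆ {l i.castSucc} and union ∩ I = B₂ ∩ I
    have hsub : B₁ ∩ Finset.Icc (l i'.castSucc) (l i'.succ) ⊆ {l i.castSucc} := by
      intro x hx
      obtain ⟨hxB, hxI⟩ := mem_inter.1 hx
      have ha : x ≤ l i.castSucc := (Finset.mem_Icc.1 (h1 hxB)).2
      have hb : l i'.castSucc ≤ x := (Finset.mem_Icc.1 hxI).1
      have hc : l i.castSucc ≤ l i'.castSucc := hmono.le_iff_le.2 hle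
      rw [Finset.mem_singleton]
      exact le_antisymm ha (hc.trans hb)
    have hunion : (B₁ ∪ B₂) ∩ Finset.Icc (l i'.castSucc) (l i'.succ)
        = B₂ ∩ Finset.Icc (l i'.castSucc) (l i'.succ) := by
      apply Finset.Subset.antisymm
      · intro x hx
        obtain ⟨hxB, hxI⟩ := mem_inter.1 hx
        rcases Finset.mem_union.1 hxB with h | h
        · have : x = l i.castSucc := Finset.mem_singleton.1 (hsub (mem_inter.2 ⟨h, hxI⟩))
          subst this
          exact mem_inter.2 ⟨hp2, hxI⟩
        · exact mem_inter.2 ⟨h, hxI⟩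
      · exact inter_subset_inter subset_union_right subset_rfl
    rw [hunion, factor_triv hσp hμNC hsub, one_mul]

end D
end INCP
namespace INCP
open Finset
variable {n : ℕ} {χ : Fin n → Bool}

theorem restrict_INCOn {S T : Finset (Fin n)} {c : Finset (Finset (Fin n))}
    (hc : INCOn S χ c) (hT : T ⊆ S) : INCOn T χ (restrictPart c T) := by
  refine ⟨restrictPart_isPartition hc.1 hT, restrictPart_noncrossing hc.2.1, ?_⟩
  intro U hU hinner k hk
  obtain ⟨W', hW', hne, s, hsW, t, htW, hsur⟩ := hinner
  obtain ⟨⟨B', hB', rfl⟩, _⟩ := mem_restrictPart.1 hW'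
  obtain ⟨⟨B, hB, rfl⟩, _⟩ := mem_restrictPart.1 hU
  cases hbool : χ k with
  | false => rfl
  | true =>
    exfalso
    have hBB' : B ≠ B' := by
      rintro rfl
      exact hne rfl
    have hkB' : k ∉ B' := fun hk' => hBB' (part_disj hc.1 hB hB' (mem_inter.1 hk).1 hk')
    have hf := chi_false_of_between hc hB' (mem_inter.1 hsW).1 (mem_inter.1 htW).1
      (part_mem_S hc.1 hB (mem_inter.1 hk).1) hkB' (hsur k hk).1 (hsur k hk).2
    rw [hf] at hbool
    exact Bool.false_ne_true hbool

noncomputable def blkOf (d : Finset (Finset (Fin n))) (p : Fin n) : Finset (Fin n) :=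
  d.sup (fun B => if p ∈ B then B else ∅)

theorem blkOf_eq {X : Finset (Fin n)} {d : Finset (Finset (Fin n))}
    (hd : IsPartitionOn X d) {B : Finset (Fin n)} (hB : B ∈ d) {p : Fin n} (hpB : p ∈ B) :
    blkOf d p = B := by
  unfold blkOf
  apply Finset.Subset.antisymm
  · intro x hx
    rw [Finset.mem_sup] at hx
    obtain ⟨C, hC, hxC⟩ := hx
    by_cases hpC : p ∈ C
    · rw [if_pos hpC] at hxC
      rwa [part_disj hd hC hB hpC hpB] at hxC
    · rw [if_neg hpC] at hxC
      simp at hxC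
  · intro x hx
    rw [Finset.mem_sup]
    exact ⟨B, hB, by rw [if_pos hpB]; exact hx⟩

theorem filter_not_mem_eq_erase {X : Finset (Fin n)} {d : Finset (Finset (Fin n))}
    (hd : IsPartitionOn X d) {B : Finset (Fin n)} (hB : B ∈ d) {p : Fin n} (hpB : p ∈ B) :
    d.filter (p ∉ ·) = d.erase B := by
  ext C
  rw [Finset.mem_filter, Finset.mem_erase]
  constructor
  · rintro ⟨hC, hpC⟩
    exact ⟨fun he => hpC (he ▸ hpB), hC⟩
  · rintro ⟨hne, hC⟩
    exact ⟨hC, fun hpC => hne (part_disj hd hC hB hpC hpB)⟩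

noncomputable def glueAt (p : Fin n) (d e : Finset (Finset (Fin n))) : Finset (Finset (Fin n)) :=
  d.filter (p ∉ ·) ∪ e.filter (p ∉ ·) ∪ {blkOf d p ∪ blkOf e p}

theorem glueAt_eq {X Y : Finset (Fin n)} {d e : Finset (Finset (Fin n))}
    (hd : IsPartitionOn X d) (he : IsPartitionOn Y e)
    {B₁ B₂ : Finset (Fin n)} (hB₁ : B₁ ∈ d) (hB₂ : B₂ ∈ e) {p : Fin n}
    (hp₁ : p ∈ B₁) (hp₂ : p ∈ B₂) :
    glueAt p d e = d.erase B₁ ∪ e.erase B₂ ∪ {B₁ ∪ B₂} := by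
  unfold glueAt
  rw [filter_not_mem_eq_erase hd hB₁ hp₁, filter_not_mem_eq_erase he hB₂ hp₂,
    blkOf_eq hd hB₁ hp₁, blkOf_eq he hB₂ hp₂]

end INCP
namespace INCP
open Finset
variable {n m : ℕ} {χ : Fin n → Bool} {l : Fin (m + 1) → Fin n}

theorem glue_INCOn (hmono : StrictMono l) (hcirc : ∀ k : Fin n, χ k = true ↔ ∃ a, l a = k)
    {V : Finset (Fin n)} {i : Fin m} {d e : Finset (Finset (Fin n))} {B₁ B₂ : Finset (Fin n)}
    (hd : INCOn (V ∩ Finset.Icc (l 0) (l i.castSucc)) χ d)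
    (he : NCOn (V ∩ Finset.Icc (l i.castSucc) (l i.succ)) e)
    (hB₁ : B₁ ∈ d) (hp₁ : l i.castSucc ∈ B₁) (hB₂ : B₂ ∈ e) (hp₂ : l i.castSucc ∈ B₂) :
    INCOn (V ∩ Finset.Icc (l 0) (l i.succ)) χ (d.erase B₁ ∪ e.erase B₂ ∪ {B₁ ∪ B₂}) := by
  set p := l i.castSucc with hpdef
  set q := l i.succ with hqdef
  set X := V ∩ Finset.Icc (l 0) p with hXdef
  set Y := V ∩ Finset.Icc p q with hYdef
  set Z := V ∩ Finset.Icc (l 0) q with hZdef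
  set M := B₁ ∪ B₂ with hMdef
  set G := d.erase B₁ ∪ e.erase B₂ ∪ {M} with hGdef
  have hpq : p ≤ q := le_of_lt (hmono (Fin.castSucc_lt_succ (i := i)))
  have hl0p : l 0 ≤ p := hmono.monotone (Fin.zero_le i.castSucc)
  have hXle : ∀ x ∈ X, x ≤ p := fun x hx => (Finset.mem_Icc.1 (mem_inter.1 hx).2).2
  have hYge : ∀ x ∈ Y, p ≤ x := fun x hx => (Finset.mem_Icc.1 (mem_inter.1 hx).2).1
  have hXZ : X ⊆ Z := by
    intro x hx
    obtain ⟨h1, h2⟩ := mem_inter.1 hx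
    obtain ⟨h3, h4⟩ := Finset.mem_Icc.1 h2
    exact mem_inter.2 ⟨h1, Finset.mem_Icc.2 ⟨h3, h4.trans hpq⟩⟩
  have hYZ : Y ⊆ Z := by
    intro x hx
    obtain ⟨h1, h2⟩ := mem_inter.1 hx
    obtain ⟨h3, h4⟩ := Finset.mem_Icc.1 h2
    exact mem_inter.2 ⟨h1, Finset.mem_Icc.2 ⟨hl0p.trans h3, h4⟩⟩
  have hZXY : ∀ x ∈ Z, x ∈ X ∨ x ∈ Y := by
    intro x hx
    obtain ⟨h1, h2⟩ := mem_inter.1 hx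
    obtain ⟨h3, h4⟩ := Finset.mem_Icc.1 h2
    rcases le_or_gt x p with h | h
    · exact Or.inl (mem_inter.2 ⟨h1, Finset.mem_Icc.2 ⟨h3, h⟩⟩)
    · exact Or.inr (mem_inter.2 ⟨h1, Finset.mem_Icc.2 ⟨le_of_lt h, h4⟩⟩)
  have hdsub : ∀ B ∈ d, B ⊆ X := fun B hB => (hd.1.1 B hB).2
  have hesub : ∀ B ∈ e, B ⊆ Y := fun B hB => (he.1.1 B hB).2
  have hde : ∀ B ∈ d.erase B₁, ∀ x ∈ B, x < p := by
    intro B hB x hx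
    obtain ⟨hne, hBd⟩ := Finset.mem_erase.1 hB
    rcases lt_or_eq_of_le (hXle x (hdsub B hBd hx)) with h | h
    · exact h
    · exact absurd (part_disj hd.1 hBd hB₁ (h ▸ hx) hp₁) hne
  have hee : ∀ B ∈ e.erase B₂, ∀ x ∈ B, p < x := by
    intro B hB x hx
    obtain ⟨hne, hBe⟩ := Finset.mem_erase.1 hB
    rcases lt_or_eq_of_le (hYge x (hesub B hBe hx)) with h | h
    · exact h
    · exact absurd (part_disj he.1 hBe hB₂ (h.symm ▸ hx) hp₂) hne
  have hMle : ∀ x ∈ M, x ≤ p → x ∈ B₁ := by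
    intro x hx hle
    rcases Finset.mem_union.1 hx with h | h
    · exact h
    · have : x = p := le_antisymm hle (hYge x (hesub B₂ hB₂ h))
      exact this ▸ hp₁
  have hMge : ∀ x ∈ M, p ≤ x → x ∈ B₂ := by
    intro x hx hle
    rcases Finset.mem_union.1 hx with h | h
    · have : x = p := le_antisymm (hXle x (hdsub B₁ hB₁ h)) hle
      exact this ▸ hp₂
    · exact h
  have hGcases : ∀ {U : Finset (Fin n)}, U ∈ G → U ∈ d.erase B₁ ∨ U ∈ e.erase B₂ ∨ U = M := by
    intro U hU
    rcases Finset.mem_union.1 hU with h | h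
    · rcases Finset.mem_union.1 h with h' | h'
      · exact Or.inl h'
      · exact Or.inr (Or.inl h')
    · exact Or.inr (Or.inr (Finset.mem_singleton.1 h))
  have hGd : ∀ {U : Finset (Fin n)}, U ∈ d.erase B₁ → U ∈ G :=
    fun hU => Finset.mem_union_left _ (Finset.mem_union_left _ hU)
  have hGe : ∀ {U : Finset (Fin n)}, U ∈ e.erase B₂ → U ∈ G :=
    fun hU => Finset.mem_union_left _ (Finset.mem_union_right _ hU)
  have hGM : M ∈ G := Finset.mem_union_right _ (Finset.mem_singleton_self M)
  have hMsub : M ⊆ Z := Finset.union_subset ((hdsub B₁ hB₁).trans hXZ) ((hesub B₂ hB₂).trans hYZ)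
  have hGsub : ∀ B ∈ G, B ⊆ Z := by
    intro B hB
    rcases hGcases hB with h | h | h
    · exact ((hdsub B (Finset.mem_erase.1 h).2).trans hXZ)
    · exact ((hesub B (Finset.mem_erase.1 h).2).trans hYZ)
    · exact h ▸ hMsub
  have hχp : χ p = true := (hcirc p).2 ⟨i.castSucc, rfl⟩
  -- partition
  have hpart : IsPartitionOn Z G := by
    constructor
    · intro B hB
      refine ⟨?_, hGsub B hB⟩
      rcases hGcases hB with h | h | h
      · exact part_nonempty hd.1 (Finset.mem_erase.1 h).2
      · exact part_nonempty he.1 (Finset.mem_erase.1 h).2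
      · exact h ▸ ⟨p, Finset.mem_union_left _ hp₁⟩
    · intro x hx
      rcases lt_trichotomy x p with hxp | hxp | hxp
      · -- x < p, x ∈ X
        have hxX : x ∈ X := by
          rcases hZXY x hx with h | h
          · exact h
          · exact absurd (hYge x h) (not_le_of_gt hxp)
        obtain ⟨B, hBd, hxB⟩ := exists_block hd.1 hxX
        by_cases hBB₁ : B = B₁
        · subst hBB₁
          refine ⟨M, ⟨hGM, Finset.mem_union_left _ hxB⟩, ?_⟩
          rintro C ⟨hC, hxC⟩
          rcases hGcases hC with h | h | h
          · exact absurd (part_disj hd.1 (Finset.mem_erase.1 h).2 hBd hxC hxB)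
              (Finset.mem_erase.1 h).1
          · exact absurd (hee C h x hxC) (not_lt_of_gt hxp)
          · exact h
        · refine ⟨B, ⟨hGd (Finset.mem_erase.2 ⟨hBB₁, hBd⟩), hxB⟩, ?_⟩
          rintro C ⟨hC, hxC⟩
          rcases hGcases hC with h | h | h
          · exact part_disj hd.1 (Finset.mem_erase.1 h).2 hBd hxC hxB
          · exact absurd (hee C h x hxC) (not_lt_of_gt hxp)
          · exfalso
            have : x ∈ B₁ := hMle x (h ▸ hxC) (le_of_lt hxp)
            exact hBB₁ (part_disj hd.1 hBd hB₁ hxB this)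
      · -- x = p
        subst hxp
        refine ⟨M, ⟨hGM, Finset.mem_union_left _ hp₁⟩, ?_⟩
        rintro C ⟨hC, hxC⟩
        rcases hGcases hC with h | h | h
        · exact absurd (hde C h _ hxC) (lt_irrefl _)
        · exact absurd (hee C h _ hxC) (lt_irrefl _)
        · exact h
      · -- x > p, x ∈ Y
        have hxY : x ∈ Y := by
          rcases hZXY x hx with h | h
          · exact absurd (hXle x h) (not_le_of_gt hxp)
          · exact h
        obtain ⟨B, hBe, hxB⟩ := exists_block he.1 hxY
        by_cases hBB₂ : B = B₂
        · subst hBB₂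
          refine ⟨M, ⟨hGM, Finset.mem_union_right _ hxB⟩, ?_⟩
          rintro C ⟨hC, hxC⟩
          rcases hGcases hC with h | h | h
          · exact absurd (hde C h x hxC) (not_lt_of_gt hxp)
          · exact absurd (part_disj he.1 (Finset.mem_erase.1 h).2 hBe hxC hxB)
              (Finset.mem_erase.1 h).1
          · exact h
        · refine ⟨B, ⟨hGe (Finset.mem_erase.2 ⟨hBB₂, hBe⟩), hxB⟩, ?_⟩
          rintro C ⟨hC, hxC⟩
          rcases hGcases hC with h | h | h
          · exact absurd (hde C h x hxC) (not_lt_of_gt hxp)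
          · exact part_disj he.1 (Finset.mem_erase.1 h).2 hBe hxC hxB
          · exfalso
            have : x ∈ B₂ := hMge x (h ▸ hxC) (le_of_lt hxp)
            exact hBB₂ (part_disj he.1 hBe hB₂ hxB this)
  -- noncrossing
  have hnc : Noncrossing G := by
    rintro U hU W hW hne ⟨s₁, r₁, s₂, r₂, hs₁, hs₂, hr₁, hr₂, o₁, o₂, o₃⟩
    rcases hGcases hU with hU' | hU' | hU' <;> rcases hGcases hW with hW' | hW' | hW'
    · exact hd.2.1 U (Finset.mem_erase.1 hU').2 W (Finset.mem_erase.1 hW').2 hne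
        ⟨s₁, r₁, s₂, r₂, hs₁, hs₂, hr₁, hr₂, o₁, o₂, o₃⟩
    · exact absurd (o₂.trans (hde U hU' s₂ hs₂)) (not_lt_of_gt (hee W hW' r₁ hr₁))
    · -- U ∈ d.erase, W = M
      subst hW'
      have hr₁p : r₁ < p := o₂.trans (hde U hU' s₂ hs₂)
      have hr₁B : r₁ ∈ B₁ := hMle r₁ hr₁ (le_of_lt hr₁p)
      have hUB₁ : U ≠ B₁ := (Finset.mem_erase.1 hU').1
      rcases le_or_gt r₂ p with h | h
      · exact hd.2.1 U (Finset.mem_erase.1 hU').2 B₁ hB₁ hUB₁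
          ⟨s₁, r₁, s₂, r₂, hs₁, hs₂, hr₁B, hMle r₂ hr₂ h, o₁, o₂, o₃⟩
      · exact hd.2.1 U (Finset.mem_erase.1 hU').2 B₁ hB₁ hUB₁
          ⟨s₁, r₁, s₂, p, hs₁, hs₂, hr₁B, hp₁, o₁, o₂, hde U hU' s₂ hs₂⟩
    · exact absurd (o₁.trans (hde W hW' r₁ hr₁)) (not_lt_of_gt (hee U hU' s₁ hs₁))
    · exact he.2 U (Finset.mem_erase.1 hU').2 W (Finset.mem_erase.1 hW').2 hne
        ⟨s₁, r₁, s₂, r₂, hs₁, hs₂, hr₁, hr₂, o₁, o₂, o₃⟩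
    · -- U ∈ e.erase, W = M
      subst hW'
      have hr₁p : p < r₁ := (hee U hU' s₁ hs₁).trans o₁
      have hr₁B : r₁ ∈ B₂ := hMge r₁ hr₁ (le_of_lt hr₁p)
      have hr₂B : r₂ ∈ B₂ := hMge r₂ hr₂ (le_of_lt (hr₁p.trans (o₂.trans o₃)))
      exact he.2 U (Finset.mem_erase.1 hU').2 B₂ hB₂ (Finset.mem_erase.1 hU').1
        ⟨s₁, r₁, s₂, r₂, hs₁, hs₂, hr₁B, hr₂B, o₁, o₂, o₃⟩
    · -- U = M, W ∈ d.erase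
      subst hU'
      have hr₂p : r₂ < p := hde W hW' r₂ hr₂
      have hs₂B : s₂ ∈ B₁ := hMle s₂ hs₂ (le_of_lt (o₃.trans hr₂p))
      have hs₁B : s₁ ∈ B₁ := hMle s₁ hs₁ (le_of_lt ((o₁.trans (o₂.trans o₃)).trans hr₂p))
      exact hd.2.1 B₁ hB₁ W (Finset.mem_erase.1 hW').2 (Ne.symm (Finset.mem_erase.1 hW').1)
        ⟨s₁, r₁, s₂, r₂, hs₁B, hs₂B, hr₁, hr₂, o₁, o₂, o₃⟩
    · -- U = M, W ∈ e.erase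
      subst hU'
      have hr₁p : p < r₁ := hee W hW' r₁ hr₁
      have hs₂B : s₂ ∈ B₂ := hMge s₂ hs₂ (le_of_lt (hr₁p.trans o₂))
      have hWB₂ : W ≠ B₂ := (Finset.mem_erase.1 hW').1
      rcases le_or_gt s₁ p with h | h
      · exact he.2 B₂ hB₂ W (Finset.mem_erase.1 hW').2 (Ne.symm hWB₂)
          ⟨p, r₁, s₂, r₂, hp₂, hs₂B, hr₁, hr₂, hr₁p, o₂, o₃⟩
      · exact he.2 B₂ hB₂ W (Finset.mem_erase.1 hW').2 (Ne.symm hWB₂)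
          ⟨s₁, r₁, s₂, r₂, hMge s₁ hs₁ (le_of_lt h), hs₂B, hr₁, hr₂, o₁, o₂, o₃⟩
    · exact hne (hU'.trans hW'.symm)
  refine ⟨hpart, hnc, ?_⟩
  -- INC condition
  intro U hU hinner k hk
  obtain ⟨W, hW, hneW, s, hsW, t, htW, hsur⟩ := hinner
  rcases hGcases hU with hU' | hU' | hU'
  · -- U ∈ d.erase B₁
    rcases hGcases hW with hW' | hW' | hW'
    · exact hd.2.2 U (Finset.mem_erase.1 hU').2
        ⟨W, (Finset.mem_erase.1 hW').2, hneW, s, hsW, t, htW, hsur⟩ k hk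
    · exfalso
      exact absurd ((hsur k hk).1.trans (hde U hU' k hk)) (not_lt_of_gt (hee W hW' s hsW))
    · -- W = M : U is inner in d via B₁
      subst hW'
      have hsp : s < p := (hsur k hk).1.trans (hde U hU' k hk)
      have hsB : s ∈ B₁ := hMle s hsW (le_of_lt hsp)
      exact hd.2.2 U (Finset.mem_erase.1 hU').2
        ⟨B₁, hB₁, Ne.symm (Finset.mem_erase.1 hU').1, s, hsB, p, hp₁,
          fun v hv => ⟨(hsur v hv).1, hde U hU' v hv⟩⟩ k hk
  · -- U ∈ e.erase B₂ : χ-true elements of U would have to be l i.succ, impossible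
    cases hbool : χ k with
    | false => rfl
    | true =>
      exfalso
      obtain ⟨a, ha⟩ := (hcirc k).1 hbool
      have hkY : k ∈ Y := hesub U (Finset.mem_erase.1 hU').2 hk
      have hpk : p < k := hee U hU' k hk
      have hkq : k ≤ q := (Finset.mem_Icc.1 (mem_inter.1 hkY).2).2
      have haq : a = i.succ := by
        have h1 : i.castSucc < a := by
          by_contra hcon
          push_neg at hcon
          rcases eq_or_lt_of_le hcon with h | h
          · have hpk' : p = k := by rw [hpdef, ← h]; exact ha
            rw [hpk'] at hpk
            exact absurd hpk (lt_irrefl _)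
          · rw [← ha] at hpk
            have := hmono h
            rw [← hpdef] at this
            exact absurd this (not_lt_of_gt hpk)
        have h2 : a ≤ i.succ := by
          by_contra hcon
          push_neg at hcon
          rw [← ha] at hkq
          exact absurd (hmono hcon) (not_lt_of_ge hkq)
        rw [Fin.lt_def] at h1
        rw [Fin.le_def] at h2
        apply Fin.ext
        simp only [Fin.coe_castSucc] at h1
        simp only [Fin.val_succ] at *
        omega
      have hkq' : k = q := by rw [← ha, haq]
      have htZ : t ∈ Z := hGsub W hW htW
      have htq : t ≤ q := (Finset.mem_Icc.1 (mem_inter.1 htZ).2).2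
      exact absurd ((hsur k hk).2.trans_le htq) (by rw [hkq']; exact lt_irrefl q)
  · -- U = M : impossible, p would be surrounded
    exfalso
    subst hU'
    have hsurp := hsur p (Finset.mem_union_left _ hp₁)
    rcases hGcases hW with hW' | hW' | hW'
    · exact absurd (hde W hW' t htW) (not_lt_of_gt hsurp.2)
    · exact absurd (hee W hW' s hsW) (not_lt_of_gt hsurp.1)
    · exact hneW hW'
end INCP
namespace INCP
open Finset
variable {n m : ℕ} {χ : Fin n → Bool} {l : Fin (m + 1) → Fin n}
  {σ : Finset (Finset (Fin n))}
  {μNC : Finset (Fin n) → Finset (Finset (Fin n)) → Finset (Finset (Fin n)) → ℂ}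

section Abstract
variable {X Y Z : Finset (Fin n)} {p : Fin n} {d e c : Finset (Finset (Fin n))}
  {B₁ B₂ : Finset (Fin n)}

theorem glue_refines (hσ : INCOn Finset.univ χ σ) (hχp : χ p = true)
    (hd : IsPartitionOn X d) (he : IsPartitionOn Y e)
    (hB₁ : B₁ ∈ d) (hp₁ : p ∈ B₁) (hB₂ : B₂ ∈ e) (hp₂ : p ∈ B₂)
    (hXZ : X ⊆ Z) (hYZ : Y ⊆ Z)
    (hZX : ∀ x ∈ Z, x ≤ p → x ∈ X) (hZY : ∀ x ∈ Z, p ≤ x → x ∈ Y)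
    (hsd : Refines (restrictPart σ X) d) (hse : Refines (restrictPart σ Y) e) :
    Refines (restrictPart σ Z) (d.erase B₁ ∪ e.erase B₂ ∪ {B₁ ∪ B₂}) := by
  have hpX : p ∈ X := (hd.1 B₁ hB₁).2 hp₁
  have hpY : p ∈ Y := (he.1 B₂ hB₂).2 hp₂
  have hpZ : p ∈ Z := hXZ hpX
  intro T hT
  obtain ⟨⟨S, hS, rfl⟩, hne⟩ := mem_restrictPart.1 hT
  by_cases hex1 : ∃ b ∈ S ∩ Z, p < b
  · by_cases hex2 : ∃ a ∈ S ∩ Z, a < p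
    · -- straddles p : goes into merged block
      obtain ⟨b, hb, hpb⟩ := hex1
      obtain ⟨a, ha, hap⟩ := hex2
      have hpS : p ∈ S := mem_block_of_between hσ hS (mem_inter.1 ha).1 (mem_inter.1 hb).1
        (Finset.mem_univ p) hχp hap hpb
      have hSX : S ∩ X ⊆ B₁ := by
        have hmem : S ∩ X ∈ restrictPart σ X :=
          mem_restrictPart.2 ⟨⟨S, hS, rfl⟩, ⟨p, mem_inter.2 ⟨hpS, hpX⟩⟩⟩
        obtain ⟨D, hD, hsub⟩ := hsd _ hmem
        have : D = B₁ := part_disj hd hD hB₁ (hsub (mem_inter.2 ⟨hpS, hpX⟩)) hp₁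
        exact this ▸ hsub
      have hSY : S ∩ Y ⊆ B₂ := by
        have hmem : S ∩ Y ∈ restrictPart σ Y :=
          mem_restrictPart.2 ⟨⟨S, hS, rfl⟩, ⟨p, mem_inter.2 ⟨hpS, hpY⟩⟩⟩
        obtain ⟨E, hE, hsub⟩ := hse _ hmem
        have : E = B₂ := part_disj he hE hB₂ (hsub (mem_inter.2 ⟨hpS, hpY⟩)) hp₂
        exact this ▸ hsub
      refine ⟨B₁ ∪ B₂, Finset.mem_union_right _ (Finset.mem_singleton_self _), ?_⟩
      intro x hx
      obtain ⟨hxS, hxZ⟩ := mem_inter.1 hx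
      rcases le_or_gt x p with h | h
      · exact Finset.mem_union_left _ (hSX (mem_inter.2 ⟨hxS, hZX x hxZ h⟩))
      · exact Finset.mem_union_right _ (hSY (mem_inter.2 ⟨hxS, hZY x hxZ (le_of_lt h)⟩))
    · -- all elements ≥ p : T ⊆ Y
      push_neg at hex2
      have hTY : S ∩ Z ⊆ Y := fun x hx => hZY x (mem_inter.1 hx).2 (hex2 x hx)
      have heq : S ∩ Y = S ∩ Z := by
        apply Finset.Subset.antisymm (inter_subset_inter subset_rfl hYZ)
        intro x hx
        exact mem_inter.2 ⟨(mem_inter.1 hx).1, hTY hx⟩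
      have hmem : S ∩ Z ∈ restrictPart σ Y := mem_restrictPart.2 ⟨⟨S, hS, heq⟩, hne⟩
      obtain ⟨E, hE, hsub⟩ := hse _ hmem
      by_cases hEB : E = B₂
      · exact ⟨B₁ ∪ B₂, Finset.mem_union_right _ (Finset.mem_singleton_self _),
          hsub.trans (hEB ▸ Finset.subset_union_right)⟩
      · exact ⟨E, Finset.mem_union_left _ (Finset.mem_union_right _ (Finset.mem_erase.2 ⟨hEB, hE⟩)),
          hsub⟩
  · -- all elements ≤ p : T ⊆ X
    push_neg at hex1
    have hTX : S ∩ Z ⊆ X := fun x hx => hZX x (mem_inter.1 hx).2 (hex1 x hx)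
    have heq : S ∩ X = S ∩ Z := by
      apply Finset.Subset.antisymm (inter_subset_inter subset_rfl hXZ)
      intro x hx
      exact mem_inter.2 ⟨(mem_inter.1 hx).1, hTX hx⟩
    have hmem : S ∩ Z ∈ restrictPart σ X := mem_restrictPart.2 ⟨⟨S, hS, heq⟩, hne⟩
    obtain ⟨D, hD, hsub⟩ := hsd _ hmem
    by_cases hDB : D = B₁
    · exact ⟨B₁ ∪ B₂, Finset.mem_union_right _ (Finset.mem_singleton_self _),
        hsub.trans (hDB ▸ Finset.subset_union_left)⟩
    · exact ⟨D, Finset.mem_union_left _ (Finset.mem_union_left _ (Finset.mem_erase.2 ⟨hDB, hD⟩)),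
        hsub⟩

theorem restrict_glue_left (hd : IsPartitionOn X d) (he : IsPartitionOn Y e)
    (hB₁ : B₁ ∈ d) (hp₁ : p ∈ B₁) (hB₂ : B₂ ∈ e) (hp₂ : p ∈ B₂)
    (hXle : ∀ x ∈ X, x ≤ p) (hYge : ∀ x ∈ Y, p ≤ x) :
    restrictPart (d.erase B₁ ∪ e.erase B₂ ∪ {B₁ ∪ B₂}) X = d := by
  have hMX : (B₁ ∪ B₂) ∩ X = B₁ := by
    apply Finset.Subset.antisymm
    · intro x hx
      obtain ⟨hxM, hxX⟩ := mem_inter.1 hx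
      rcases Finset.mem_union.1 hxM with h | h
      · exact h
      · have : x = p := le_antisymm (hXle x hxX) (hYge x ((he.1 B₂ hB₂).2 h))
        exact this ▸ hp₁
    · intro x hx
      exact mem_inter.2 ⟨Finset.mem_union_left _ hx, (hd.1 B₁ hB₁).2 hx⟩
  ext C
  rw [mem_restrictPart]
  constructor
  · rintro ⟨⟨B, hB, rfl⟩, hne⟩
    rcases Finset.mem_union.1 hB with hB' | hB'
    · rcases Finset.mem_union.1 hB' with h | h
      · obtain ⟨hBne, hBd⟩ := Finset.mem_erase.1 h
        rwa [inter_eq_left.2 ((hd.1 B hBd).2)]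
      · exfalso
        obtain ⟨hBne, hBe⟩ := Finset.mem_erase.1 h
        obtain ⟨x, hx⟩ := hne
        obtain ⟨hxB, hxX⟩ := mem_inter.1 hx
        have hxp : x = p := le_antisymm (hXle x hxX) (hYge x ((he.1 B hBe).2 hxB))
        subst hxp
        exact hBne (part_disj he hBe hB₂ hxB hp₂)
    · rw [Finset.mem_singleton.1 hB', hMX]
      exact hB₁
  · intro hC
    by_cases hCB : C = B₁
    · rw [hCB]
      exact ⟨⟨B₁ ∪ B₂, Finset.mem_union_right _ (Finset.mem_singleton_self _), hMX⟩,
        part_nonempty hd hB₁⟩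
    · exact ⟨⟨C, Finset.mem_union_left _ (Finset.mem_union_left _ (Finset.mem_erase.2 ⟨hCB, hC⟩)),
        inter_eq_left.2 ((hd.1 C hC).2)⟩, part_nonempty hd hC⟩

theorem restrict_glue_right (hd : IsPartitionOn X d) (he : IsPartitionOn Y e)
    (hB₁ : B₁ ∈ d) (hp₁ : p ∈ B₁) (hB₂ : B₂ ∈ e) (hp₂ : p ∈ B₂)
    (hXle : ∀ x ∈ X, x ≤ p) (hYge : ∀ x ∈ Y, p ≤ x) :
    restrictPart (d.erase B₁ ∪ e.erase B₂ ∪ {B₁ ∪ B₂}) Y = e := by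
  have hMY : (B₁ ∪ B₂) ∩ Y = B₂ := by
    apply Finset.Subset.antisymm
    · intro x hx
      obtain ⟨hxM, hxY⟩ := mem_inter.1 hx
      rcases Finset.mem_union.1 hxM with h | h
      · have : x = p := le_antisymm (hXle x ((hd.1 B₁ hB₁).2 h)) (hYge x hxY)
        exact this ▸ hp₂
      · exact h
    · intro x hx
      exact mem_inter.2 ⟨Finset.mem_union_right _ hx, (he.1 B₂ hB₂).2 hx⟩
  ext C
  rw [mem_restrictPart]
  constructor
  · rintro ⟨⟨B, hB, rfl⟩, hne⟩
    rcases Finset.mem_union.1 hB with hB' | hB'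
    · rcases Finset.mem_union.1 hB' with h | h
      · exfalso
        obtain ⟨hBne, hBd⟩ := Finset.mem_erase.1 h
        obtain ⟨x, hx⟩ := hne
        obtain ⟨hxB, hxY⟩ := mem_inter.1 hx
        have hxp : x = p := le_antisymm (hXle x ((hd.1 B hBd).2 hxB)) (hYge x hxY)
        subst hxp
        exact hBne (part_disj hd hBd hB₁ hxB hp₁)
      · obtain ⟨hBne, hBe⟩ := Finset.mem_erase.1 h
        rwa [inter_eq_left.2 ((he.1 B hBe).2)]
    · rw [Finset.mem_singleton.1 hB', hMY]
      exact hB₂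
  · intro hC
    by_cases hCB : C = B₂
    · rw [hCB]
      exact ⟨⟨B₁ ∪ B₂, Finset.mem_union_right _ (Finset.mem_singleton_self _), hMY⟩,
        part_nonempty he hB₂⟩
    · exact ⟨⟨C, Finset.mem_union_left _ (Finset.mem_union_right _ (Finset.mem_erase.2 ⟨hCB, hC⟩)),
        inter_eq_left.2 ((he.1 C hC).2)⟩, part_nonempty he hC⟩

-- left inverse : gluing the two restrictions of c gives back c
theorem glue_of_restrict (hc : INCOn Z χ c) (hχp : χ p = true)
    {Bs : Finset (Fin n)} (hBs : Bs ∈ c) (hpBs : p ∈ Bs)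
    (hXZ : X ⊆ Z) (hYZ : Y ⊆ Z)
    (hZX : ∀ x ∈ Z, x ≤ p → x ∈ X) (hZY : ∀ x ∈ Z, p ≤ x → x ∈ Y)
    (hXle : ∀ x ∈ X, x ≤ p) (hYge : ∀ x ∈ Y, p ≤ x) :
    (restrictPart c X).erase (Bs ∩ X) ∪ (restrictPart c Y).erase (Bs ∩ Y) ∪
      {Bs ∩ X ∪ Bs ∩ Y} = c := by
  have hsubZ : ∀ B ∈ c, B ⊆ Z := fun B hB => (hc.1.1 B hB).2
  have hpZ : p ∈ Z := hsubZ Bs hBs hpBs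
  have hpX : p ∈ X := hZX p hpZ le_rfl
  have hpY : p ∈ Y := hZY p hpZ le_rfl
  have hBsXY : Bs ∩ X ∪ Bs ∩ Y = Bs := by
    apply Finset.Subset.antisymm
    · intro x hx
      rcases Finset.mem_union.1 hx with h | h
      · exact (mem_inter.1 h).1
      · exact (mem_inter.1 h).1
    · intro x hx
      rcases le_or_gt x p with h | h
      · exact Finset.mem_union_left _ (mem_inter.2 ⟨hx, hZX x (hsubZ Bs hBs hx) h⟩)
      · exact Finset.mem_union_right _ (mem_inter.2 ⟨hx, hZY x (hsubZ Bs hBs hx) (le_of_lt h)⟩)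
  have hstr : ∀ B ∈ c, p ∉ B → (∀ x ∈ B, x < p) ∨ (∀ x ∈ B, p < x) := by
    intro B hB hpB
    by_cases hex : ∃ b ∈ B, p < b
    · obtain ⟨b, hb, hpb⟩ := hex
      right
      intro x hx
      rcases lt_trichotomy x p with h | h | h
      · exact absurd (mem_block_of_between hc hB hx hb hpZ hχp h hpb) hpB
      · exact absurd (h ▸ hx) hpB
      · exact h
    · push_neg at hex
      left
      intro x hx
      exact lt_of_le_of_ne (hex x hx) (fun he => hpB (he ▸ hx))
  have hsubX : ∀ B ∈ c, (∀ x ∈ B, x < p) → B ⊆ X :=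
    fun B hB h x hx => hZX x (hsubZ B hB hx) (le_of_lt (h x hx))
  have hsubY : ∀ B ∈ c, (∀ x ∈ B, p < x) → B ⊆ Y :=
    fun B hB h x hx => hZY x (hsubZ B hB hx) (le_of_lt (h x hx))
  ext B
  constructor
  · intro hB
    rcases Finset.mem_union.1 hB with hB' | hB'
    · rcases Finset.mem_union.1 hB' with h | h
      · obtain ⟨hBne, hBr⟩ := Finset.mem_erase.1 h
        obtain ⟨⟨B', hB'c, rfl⟩, hne⟩ := mem_restrictPart.1 hBr
        have hB'Bs : B' ≠ Bs := by
          rintro rfl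
          exact hBne rfl
        have hpB' : p ∉ B' := fun hp' => hB'Bs (part_disj hc.1 hB'c hBs hp' hpBs)
        rcases hstr B' hB'c hpB' with hlt | hgt
        · rwa [inter_eq_left.2 (hsubX B' hB'c hlt)]
        · exfalso
          obtain ⟨x, hx⟩ := hne
          exact absurd (hXle x (mem_inter.1 hx).2) (not_le_of_gt (hgt x (mem_inter.1 hx).1))
      · obtain ⟨hBne, hBr⟩ := Finset.mem_erase.1 h
        obtain ⟨⟨B', hB'c, rfl⟩, hne⟩ := mem_restrictPart.1 hBr
        have hB'Bs : B' ≠ Bs := by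
          rintro rfl
          exact hBne rfl
        have hpB' : p ∉ B' := fun hp' => hB'Bs (part_disj hc.1 hB'c hBs hp' hpBs)
        rcases hstr B' hB'c hpB' with hlt | hgt
        · exfalso
          obtain ⟨x, hx⟩ := hne
          exact absurd (hYge x (mem_inter.1 hx).2) (not_le_of_gt (hlt x (mem_inter.1 hx).1))
        · rwa [inter_eq_left.2 (hsubY B' hB'c hgt)]
    · rw [Finset.mem_singleton.1 hB', hBsXY]
      exact hBs
  · intro hB
    by_cases hBBs : B = Bs
    · subst hBBs
      exact Finset.mem_union_right _ (Finset.mem_singleton.2 hBsXY.symm)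
    · have hpB : p ∉ B := fun hp' => hBBs (part_disj hc.1 hB hBs hp' hpBs)
      have hBne : B.Nonempty := part_nonempty hc.1 hB
      rcases hstr B hB hpB with hlt | hgt
      · have hBX : B ⊆ X := hsubX B hB hlt
        have hmem : B ∈ restrictPart c X :=
          mem_restrictPart.2 ⟨⟨B, hB, inter_eq_left.2 hBX⟩, hBne⟩
        have hne2 : B ≠ Bs ∩ X := by
          intro he
          exact hpB (he ▸ mem_inter.2 ⟨hpBs, hpX⟩)
        exact Finset.mem_union_left _ (Finset.mem_union_left _ (Finset.mem_erase.2 ⟨hne2, hmem⟩))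
      · have hBY : B ⊆ Y := hsubY B hB hgt
        have hmem : B ∈ restrictPart c Y :=
          mem_restrictPart.2 ⟨⟨B, hB, inter_eq_left.2 hBY⟩, hBne⟩
        have hne2 : B ≠ Bs ∩ Y := by
          intro he
          exact hpB (he ▸ mem_inter.2 ⟨hpBs, hpY⟩)
        exact Finset.mem_union_left _ (Finset.mem_union_right _ (Finset.mem_erase.2 ⟨hne2, hmem⟩))

end Abstract

theorem wt_glue (hσp : IsPartitionOn Finset.univ σ)
    (hμNC : ∀ A : Finset (Fin n), IsMobiusOn (NCset A) Refines (μNC A)) (hmono : StrictMono l)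
    {i : Fin m} {X Y : Finset (Fin n)} {d e : Finset (Finset (Fin n))} {B₁ B₂ : Finset (Fin n)}
    (hd : IsPartitionOn X d) (he : IsPartitionOn Y e)
    (hB₁ : B₁ ∈ d) (hp₁ : l i.castSucc ∈ B₁) (hB₂ : B₂ ∈ e) (hp₂ : l i.castSucc ∈ B₂)
    (hX2 : X ⊆ Finset.Icc (l 0) (l i.castSucc)) (hY2 : Y ⊆ Finset.Icc (l i.castSucc) (l i.succ)) :
    wt l μNC σ (d.erase B₁ ∪ e.erase B₂ ∪ {B₁ ∪ B₂}) = wt l μNC σ d * ncw σ μNC e := by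
  have hXle : ∀ x ∈ X, x ≤ l i.castSucc := fun x hx => (Finset.mem_Icc.1 (hX2 hx)).2
  have hYge : ∀ x ∈ Y, l i.castSucc ≤ x := fun x hx => (Finset.mem_Icc.1 (hY2 hx)).1
  have hdisj1 : Disjoint (d.erase B₁) (e.erase B₂) := by
    rw [Finset.disjoint_left]
    intro B h1 h2
    obtain ⟨hne1, hBd⟩ := Finset.mem_erase.1 h1
    obtain ⟨hne2, hBe⟩ := Finset.mem_erase.1 h2
    obtain ⟨x, hx⟩ := part_nonempty hd hBd
    have hxp : x = l i.castSucc :=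
      le_antisymm (hXle x ((hd.1 B hBd).2 hx)) (hYge x ((he.1 B hBe).2 hx))
    subst hxp
    exact hne1 (part_disj hd hBd hB₁ hx hp₁)
  have hdisj2 : Disjoint (d.erase B₁ ∪ e.erase B₂) ({B₁ ∪ B₂} : Finset (Finset (Fin n))) := by
    rw [Finset.disjoint_right]
    intro B hBs hBu
    rw [Finset.mem_singleton.1 hBs] at hBu
    have hp : l i.castSucc ∈ B₁ ∪ B₂ := Finset.mem_union_left _ hp₁
    rcases Finset.mem_union.1 hBu with h | h
    · exact (Finset.mem_erase.1 h).1 (part_disj hd (Finset.mem_erase.1 h).2 hB₁ hp hp₁)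
    · exact (Finset.mem_erase.1 h).1 (part_disj he (Finset.mem_erase.1 h).2 hB₂
        (Finset.mem_union_right _ hp₂) hp₂)
  unfold wt
  rw [Finset.prod_union hdisj2, Finset.prod_union hdisj1, Finset.prod_singleton]
  have hM : blockw l μNC σ (B₁ ∪ B₂) = blockw l μNC σ B₁ * blockw l μNC σ B₂ :=
    blockw_mult hσp hμNC hmono ((hd.1 B₁ hB₁).2.trans hX2) ((he.1 B₂ hB₂).2.trans hY2) hp₁ hp₂
  have hEblocks : ∀ E ∈ e, blockw l μNC σ E = μNC E (restrictPart σ E) {E} := by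
    intro E hE
    exact blockw_interval hσp hμNC hmono (part_nonempty he hE) ((he.1 E hE).2.trans hY2)
  have he1 : ∏ E ∈ e.erase B₂, blockw l μNC σ E
      = ∏ E ∈ e.erase B₂, μNC E (restrictPart σ E) {E} :=
    Finset.prod_congr rfl (fun E hE => hEblocks E (Finset.mem_erase.1 hE).2)
  rw [hM, he1]
  have hgoal1 : (∏ W ∈ d.erase B₁, blockw l μNC σ W) * blockw l μNC σ B₁
      = ∏ W ∈ d, blockw l μNC σ W := Finset.prod_erase_mul d _ hB₁
  have hgoal2 : (∏ E ∈ e.erase B₂, μNC E (restrictPart σ E) {E})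
      * μNC B₂ (restrictPart σ B₂) {B₂} = ∏ E ∈ e, μNC E (restrictPart σ E) {E} :=
    Finset.prod_erase_mul e _ hB₂
  unfold ncw
  rw [← hgoal1, ← hgoal2, hEblocks B₂ hB₂]
  ring
end INCP
namespace INCP
open Finset
variable {n m : ℕ} {χ : Fin n → Bool} {l : Fin (m + 1) → Fin n}
  {σ : Finset (Finset (Fin n))}
  {μNC : Finset (Fin n) → Finset (Finset (Fin n)) → Finset (Finset (Fin n)) → ℂ}

theorem restrict_top_iff (hσp : IsPartitionOn Finset.univ σ) {T : Finset (Fin n)}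
    (hT : T.Nonempty) :
    restrictPart σ T = {T} ↔ ∃ S₀ ∈ σ, T ⊆ S₀ := by
  constructor
  · intro h
    obtain ⟨x, hx⟩ := hT
    obtain ⟨S₀, hS₀, hxS₀⟩ := exists_block hσp (Finset.mem_univ x)
    have hmem : S₀ ∩ T ∈ restrictPart σ T :=
      mem_restrictPart.2 ⟨⟨S₀, hS₀, rfl⟩, ⟨x, mem_inter.2 ⟨hxS₀, hx⟩⟩⟩
    rw [h, Finset.mem_singleton] at hmem
    exact ⟨S₀, hS₀, by rw [← hmem]; exact inter_subset_left⟩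
  · rintro ⟨S₀, hS₀, hTS⟩
    ext C
    rw [mem_restrictPart, Finset.mem_singleton]
    constructor
    · rintro ⟨⟨B, hB, rfl⟩, hne⟩
      obtain ⟨y, hy⟩ := hne
      have hBS : B = S₀ := part_disj hσp hB hS₀ (mem_inter.1 hy).1 (hTS (mem_inter.1 hy).2)
      rw [hBS, inter_eq_right.2 hTS]
    · intro h
      rw [h]
      exact ⟨⟨S₀, hS₀, inter_eq_right.2 hTS⟩, hT⟩

theorem glue_split (hσ : INCOn Finset.univ χ σ)
    (hμNC : ∀ A : Finset (Fin n), IsMobiusOn (NCset A) Refines (μNC A))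
    (hmono : StrictMono l) (hcirc : ∀ k : Fin n, χ k = true ↔ ∃ a, l a = k)
    {V : Finset (Fin n)} {i : Fin m} (hpV : l i.castSucc ∈ V) :
    (∑ c ∈ (INCset (V ∩ Finset.Icc (l 0) (l i.succ)) χ).filter
        (fun c => Refines (restrictPart σ (V ∩ Finset.Icc (l 0) (l i.succ))) c), wt l μNC σ c)
    = (∑ d ∈ (INCset (V ∩ Finset.Icc (l 0) (l i.castSucc)) χ).filter
          (fun d => Refines (restrictPart σ (V ∩ Finset.Icc (l 0) (l i.castSucc))) d),
        wt l μNC σ d) *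
      (∑ e ∈ (NCset (V ∩ Finset.Icc (l i.castSucc) (l i.succ))).filter
          (fun e => Refines (restrictPart σ (V ∩ Finset.Icc (l i.castSucc) (l i.succ))) e ∧
            Refines e ({V ∩ Finset.Icc (l i.castSucc) (l i.succ)} : Finset (Finset (Fin n)))),
        ncw σ μNC e) := by
  have hσp := hσ.1
  set p := l i.castSucc with hpdef
  set q := l i.succ with hqdef
  set X := V ∩ Finset.Icc (l 0) p with hXdef
  set Y := V ∩ Finset.Icc p q with hYdef
  set Z := V ∩ Finset.Icc (l 0) q with hZdef
  have hpq : p ≤ q := le_of_lt (hmono (Fin.castSucc_lt_succ (i := i)))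
  have hl0p : l 0 ≤ p := hmono.monotone (Fin.zero_le i.castSucc)
  have hXle : ∀ x ∈ X, x ≤ p := fun x hx => (Finset.mem_Icc.1 (mem_inter.1 hx).2).2
  have hYge : ∀ x ∈ Y, p ≤ x := fun x hx => (Finset.mem_Icc.1 (mem_inter.1 hx).2).1
  have hXZ : X ⊆ Z := by
    intro x hx
    obtain ⟨h1, h2⟩ := mem_inter.1 hx
    obtain ⟨h3, h4⟩ := Finset.mem_Icc.1 h2
    exact mem_inter.2 ⟨h1, Finset.mem_Icc.2 ⟨h3, h4.trans hpq⟩⟩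
  have hYZ : Y ⊆ Z := by
    intro x hx
    obtain ⟨h1, h2⟩ := mem_inter.1 hx
    obtain ⟨h3, h4⟩ := Finset.mem_Icc.1 h2
    exact mem_inter.2 ⟨h1, Finset.mem_Icc.2 ⟨hl0p.trans h3, h4⟩⟩
  have hZX : ∀ x ∈ Z, x ≤ p → x ∈ X := by
    intro x hx h
    obtain ⟨h1, h2⟩ := mem_inter.1 hx
    exact mem_inter.2 ⟨h1, Finset.mem_Icc.2 ⟨(Finset.mem_Icc.1 h2).1, h⟩⟩
  have hZY : ∀ x ∈ Z, p ≤ x → x ∈ Y := by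
    intro x hx h
    obtain ⟨h1, h2⟩ := mem_inter.1 hx
    exact mem_inter.2 ⟨h1, Finset.mem_Icc.2 ⟨h, (Finset.mem_Icc.1 h2).2⟩⟩
  have hpX : p ∈ X := mem_inter.2 ⟨hpV, Finset.mem_Icc.2 ⟨hl0p, le_rfl⟩⟩
  have hpY : p ∈ Y := mem_inter.2 ⟨hpV, Finset.mem_Icc.2 ⟨le_rfl, hpq⟩⟩
  have hpZ : p ∈ Z := hXZ hpX
  have hχp : χ p = true := (hcirc p).2 ⟨i.castSucc, rfl⟩
  rw [Finset.sum_mul_sum, ← Finset.sum_product']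
  refine Finset.sum_nbij' (fun c => (restrictPart c X, restrictPart c Y))
    (fun pr => glueAt p pr.1 pr.2) ?_ ?_ ?_ ?_ ?_
  · -- forward membership
    intro c hc
    obtain ⟨hcINC, hσc⟩ := Finset.mem_filter.1 hc
    have hc' := mem_INCset.1 hcINC
    rw [Finset.mem_product]
    constructor
    · rw [Finset.mem_filter]
      refine ⟨mem_INCset.2 (restrict_INCOn hc' hXZ), ?_⟩
      rw [← restrictPart_restrictPart (P := σ) hXZ]
      exact refines_restrictPart hσc
    · rw [Finset.mem_filter]
      refine ⟨mem_NCset.2 ⟨restrictPart_isPartition hc'.1 hYZ,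
        restrictPart_noncrossing hc'.2.1⟩, ?_, ?_⟩
      · rw [← restrictPart_restrictPart (P := σ) hYZ]
        exact refines_restrictPart hσc
      · refine refines_top ?_
        intro B hB
        obtain ⟨⟨B', _, rfl⟩, _⟩ := mem_restrictPart.1 hB
        exact inter_subset_right
  · -- backward membership
    intro pr hpr
    obtain ⟨hpr1, hpr2⟩ := Finset.mem_product.1 hpr
    obtain ⟨hdINC, hσd⟩ := Finset.mem_filter.1 hpr1
    obtain ⟨heNC, hσe, _⟩ := Finset.mem_filter.1 hpr2
    have hd := mem_INCset.1 hdINC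
    have he := mem_NCset.1 heNC
    obtain ⟨B₁, hB₁, hp₁⟩ := exists_block hd.1 hpX
    obtain ⟨B₂, hB₂, hp₂⟩ := exists_block he.1 hpY
    rw [glueAt_eq hd.1 he.1 hB₁ hB₂ hp₁ hp₂, Finset.mem_filter]
    exact ⟨mem_INCset.2 (glue_INCOn hmono hcirc hd he hB₁ hp₁ hB₂ hp₂),
      glue_refines hσ hχp hd.1 he.1 hB₁ hp₁ hB₂ hp₂ hXZ hYZ hZX hZY hσd hσe⟩
  · -- left inverse
    intro c hc
    obtain ⟨hcINC, hσc⟩ := Finset.mem_filter.1 hc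
    have hc' := mem_INCset.1 hcINC
    obtain ⟨Bs, hBs, hpBs⟩ := exists_block hc'.1 hpZ
    have hBX : Bs ∩ X ∈ restrictPart c X :=
      mem_restrictPart.2 ⟨⟨Bs, hBs, rfl⟩, ⟨p, mem_inter.2 ⟨hpBs, hpX⟩⟩⟩
    have hBY : Bs ∩ Y ∈ restrictPart c Y :=
      mem_restrictPart.2 ⟨⟨Bs, hBs, rfl⟩, ⟨p, mem_inter.2 ⟨hpBs, hpY⟩⟩⟩
    dsimp only
    rw [glueAt_eq (restrictPart_isPartition hc'.1 hXZ) (restrictPart_isPartition hc'.1 hYZ)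
      hBX hBY (mem_inter.2 ⟨hpBs, hpX⟩) (mem_inter.2 ⟨hpBs, hpY⟩)]
    exact glue_of_restrict hc' hχp hBs hpBs hXZ hYZ hZX hZY hXle hYge
  · -- right inverse
    intro pr hpr
    obtain ⟨hpr1, hpr2⟩ := Finset.mem_product.1 hpr
    obtain ⟨hdINC, hσd⟩ := Finset.mem_filter.1 hpr1
    obtain ⟨heNC, hσe, _⟩ := Finset.mem_filter.1 hpr2
    have hd := mem_INCset.1 hdINC
    have he := mem_NCset.1 heNC
    obtain ⟨B₁, hB₁, hp₁⟩ := exists_block hd.1 hpX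
    obtain ⟨B₂, hB₂, hp₂⟩ := exists_block he.1 hpY
    rw [glueAt_eq hd.1 he.1 hB₁ hB₂ hp₁ hp₂,
      restrict_glue_left hd.1 he.1 hB₁ hp₁ hB₂ hp₂ hXle hYge,
      restrict_glue_right hd.1 he.1 hB₁ hp₁ hB₂ hp₂ hXle hYge]
  · -- weights
    intro c hc
    obtain ⟨hcINC, hσc⟩ := Finset.mem_filter.1 hc
    have hc' := mem_INCset.1 hcINC
    obtain ⟨Bs, hBs, hpBs⟩ := exists_block hc'.1 hpZ
    have hBX : Bs ∩ X ∈ restrictPart c X :=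
      mem_restrictPart.2 ⟨⟨Bs, hBs, rfl⟩, ⟨p, mem_inter.2 ⟨hpBs, hpX⟩⟩⟩
    have hBY : Bs ∩ Y ∈ restrictPart c Y :=
      mem_restrictPart.2 ⟨⟨Bs, hBs, rfl⟩, ⟨p, mem_inter.2 ⟨hpBs, hpY⟩⟩⟩
    dsimp only
    have hback := glue_of_restrict hc' hχp hBs hpBs hXZ hYZ hZX hZY hXle hYge
    calc wt l μNC σ c
        = wt l μNC σ ((restrictPart c X).erase (Bs ∩ X) ∪ (restrictPart c Y).erase (Bs ∩ Y) ∪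
            {Bs ∩ X ∪ Bs ∩ Y}) := by rw [hback]
      _ = wt l μNC σ (restrictPart c X) * ncw σ μNC (restrictPart c Y) :=
          wt_glue hσp hμNC hmono (restrictPart_isPartition hc'.1 hXZ)
            (restrictPart_isPartition hc'.1 hYZ) hBX (mem_inter.2 ⟨hpBs, hpX⟩)
            hBY (mem_inter.2 ⟨hpBs, hpY⟩)
            (by rw [hXdef, hpdef]; exact inter_subset_right)
            (by rw [hYdef, hpdef, hqdef]; exact inter_subset_right)
end INCP
namespace INCP
open Finset
variable {n m : ℕ} {χ : Fin n → Bool} {l : Fin (m + 1) → Fin n}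
  {σ : Finset (Finset (Fin n))}
  {μNC : Finset (Fin n) → Finset (Finset (Fin n)) → Finset (Finset (Fin n)) → ℂ}

theorem eq_succ_of_between (hmono : StrictMono l) {i : Fin m} {a : Fin (m + 1)}
    (h1 : l i.castSucc < l a) (h2 : l a ≤ l i.succ) : a = i.succ := by
  have ha1 : i.castSucc < a := by
    by_contra hcon
    push_neg at hcon
    exact absurd (hmono.monotone hcon) (not_le_of_gt h1)
  have ha2 : a ≤ i.succ := by
    by_contra hcon
    push_neg at hcon
    exact absurd (hmono hcon) (not_lt_of_ge h2)
  rw [Fin.lt_def] at ha1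
  rw [Fin.le_def] at ha2
  apply Fin.ext
  simp only [Fin.coe_castSucc] at ha1
  simp only [Fin.val_succ] at *
  omega

theorem INCOn_iff_NCOn_interval (hmono : StrictMono l)
    (hcirc : ∀ k : Fin n, χ k = true ↔ ∃ a, l a = k)
    {Y : Finset (Fin n)} {i : Fin m}
    (hY : Y ⊆ Finset.Icc (l i.castSucc) (l i.succ)) (hpY : l i.castSucc ∉ Y)
    {c : Finset (Finset (Fin n))} : INCOn Y χ c ↔ NCOn Y c := by
  constructor
  · intro hc
    exact ⟨hc.1, hc.2.1⟩
  · intro hc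
    refine ⟨hc.1, hc.2, ?_⟩
    intro U hU hinner k hk
    cases hbool : χ k with
    | false => rfl
    | true =>
      exfalso
      obtain ⟨a, ha⟩ := (hcirc k).1 hbool
      have hkY : k ∈ Y := (hc.1.1 U hU).2 hk
      have hk1 : l i.castSucc ≤ k := (Finset.mem_Icc.1 (hY hkY)).1
      have hk2 : k ≤ l i.succ := (Finset.mem_Icc.1 (hY hkY)).2
      have hk1' : l i.castSucc < k :=
        lt_of_le_of_ne hk1 (fun he => hpY (he ▸ hkY))
      have haeq : a = i.succ := eq_succ_of_between hmono (ha ▸ hk1') (ha ▸ hk2)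
      have hkq : k = l i.succ := by rw [← ha, haeq]
      obtain ⟨W, hW, hne, s, hsW, t, htW, hsur⟩ := hinner
      have htY : t ∈ Y := (hc.1.1 W hW).2 htW
      have htq : t ≤ l i.succ := (Finset.mem_Icc.1 (hY htY)).2
      exact absurd ((hsur k hk).2.trans_le htq) (by rw [hkq]; exact lt_irrefl _)

theorem wt_eq_ncw_interval (hσp : IsPartitionOn Finset.univ σ)
    (hμNC : ∀ A : Finset (Fin n), IsMobiusOn (NCset A) Refines (μNC A))
    (hmono : StrictMono l) {Y : Finset (Fin n)} {i : Fin m}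
    (hY : Y ⊆ Finset.Icc (l i.castSucc) (l i.succ)) {c : Finset (Finset (Fin n))}
    (hc : IsPartitionOn Y c) : wt l μNC σ c = ncw σ μNC c := by
  unfold wt ncw
  apply Finset.prod_congr rfl
  intro W hW
  exact blockw_interval hσp hμNC hmono (part_nonempty hc hW) (((hc.1 W hW).2).trans hY)

theorem E_master (hσ : INCOn Finset.univ χ σ)
    (hμNC : ∀ A : Finset (Fin n), IsMobiusOn (NCset A) Refines (μNC A))
    (hmono : StrictMono l) (hcirc : ∀ k : Fin n, χ k = true ↔ ∃ a, l a = k)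
    {V : Finset (Fin n)}
    (hchain : ∀ a : Fin (m + 1), (∃ s ∈ V, s < l a) → (∃ t ∈ V, l a < t) → l a ∈ V) :
    ∀ a : Fin (m + 1),
      (∑ c ∈ (INCset (V ∩ Finset.Icc (l 0) (l a)) χ).filter
          (fun c => Refines (restrictPart σ (V ∩ Finset.Icc (l 0) (l a))) c), wt l μNC σ c)
      = if restrictPart σ (V ∩ Finset.Icc (l 0) (l a))
          = (if (V ∩ Finset.Icc (l 0) (l a)).Nonempty
              then ({V ∩ Finset.Icc (l 0) (l a)} : Finset (Finset (Fin n))) else ∅)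
        then 1 else 0 := by
  have hσp := hσ.1
  have main : ∀ j : ℕ, ∀ a : Fin (m + 1), (a : ℕ) = j →
      (∑ c ∈ (INCset (V ∩ Finset.Icc (l 0) (l a)) χ).filter
          (fun c => Refines (restrictPart σ (V ∩ Finset.Icc (l 0) (l a))) c), wt l μNC σ c)
      = if restrictPart σ (V ∩ Finset.Icc (l 0) (l a))
          = (if (V ∩ Finset.Icc (l 0) (l a)).Nonempty
              then ({V ∩ Finset.Icc (l 0) (l a)} : Finset (Finset (Fin n))) else ∅)
        then 1 else 0 := by
    intro j
    induction j with
    | zero =>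
      intro a ha
      have ha0 : a = 0 := Fin.ext (by simpa using ha)
      subst ha0
      rw [Finset.Icc_self]
      by_cases h0V : l 0 ∈ V
      · have hX : V ∩ ({l 0} : Finset (Fin n)) = {l 0} := by
          ext x
          simp only [mem_inter, Finset.mem_singleton]
          constructor
          · rintro ⟨_, h⟩; exact h
          · rintro rfl; exact ⟨h0V, rfl⟩
        rw [hX, INCset_singleton, restrictPart_singleton hσp (Finset.mem_univ (l 0))]
        rw [Finset.filter_singleton, if_pos (refines_refl _), Finset.sum_singleton]
        rw [if_pos (Finset.singleton_nonempty _), if_pos rfl]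
        unfold wt
        rw [Finset.prod_singleton]
        unfold blockw
        apply Finset.prod_eq_one
        intro i _
        exact factor_triv hσp hμNC inter_subset_left
      · have hX : V ∩ ({l 0} : Finset (Fin n)) = ∅ := by
          ext x
          simp only [mem_inter, Finset.mem_singleton, Finset.notMem_empty, iff_false, not_and]
          rintro hxV rfl
          exact h0V hxV
        rw [hX, INCset_empty, restrictPart_empty]
        rw [Finset.filter_singleton, if_pos (by intro B hB; simp at hB), Finset.sum_singleton]
        rw [if_neg (Finset.not_nonempty_empty : ¬(∅ : Finset (Fin n)).Nonempty), if_pos rfl]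
        unfold wt
        rw [Finset.prod_empty]
    | succ j ih =>
      intro a ha
      have hjm : j < m := by
        have := a.isLt
        omega
      set i : Fin m := ⟨j, hjm⟩ with hidef
      have hai : a = i.succ := by
        apply Fin.ext
        rw [ha]
        rfl
      subst hai
      have hcast : (i.castSucc : Fin (m + 1)).val = j := rfl
      set p := l i.castSucc with hpdef
      set q := l i.succ with hqdef
      set X := V ∩ Finset.Icc (l 0) p with hXdef
      set Y := V ∩ Finset.Icc p q with hYdef
      set Z := V ∩ Finset.Icc (l 0) q with hZdef
      have hpq : p ≤ q := le_of_lt (hmono (Fin.castSucc_lt_succ (i := i)))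
      have hl0p : l 0 ≤ p := hmono.monotone (Fin.zero_le i.castSucc)
      have hXZ : X ⊆ Z := by
        intro x hx
        obtain ⟨h1, h2⟩ := mem_inter.1 hx
        obtain ⟨h3, h4⟩ := Finset.mem_Icc.1 h2
        exact mem_inter.2 ⟨h1, Finset.mem_Icc.2 ⟨h3, h4.trans hpq⟩⟩
      have hYZ : Y ⊆ Z := by
        intro x hx
        obtain ⟨h1, h2⟩ := mem_inter.1 hx
        obtain ⟨h3, h4⟩ := Finset.mem_Icc.1 h2
        exact mem_inter.2 ⟨h1, Finset.mem_Icc.2 ⟨hl0p.trans h3, h4⟩⟩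
      have hZX : ∀ x ∈ Z, x ≤ p → x ∈ X := by
        intro x hx h
        obtain ⟨h1, h2⟩ := mem_inter.1 hx
        exact mem_inter.2 ⟨h1, Finset.mem_Icc.2 ⟨(Finset.mem_Icc.1 h2).1, h⟩⟩
      have hZY : ∀ x ∈ Z, p ≤ x → x ∈ Y := by
        intro x hx h
        obtain ⟨h1, h2⟩ := mem_inter.1 hx
        exact mem_inter.2 ⟨h1, Finset.mem_Icc.2 ⟨h, (Finset.mem_Icc.1 h2).2⟩⟩
      by_cases hpV : p ∈ V
      · -- glue case
        have hpX : p ∈ X := mem_inter.2 ⟨hpV, Finset.mem_Icc.2 ⟨hl0p, le_rfl⟩⟩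
        have hpY : p ∈ Y := mem_inter.2 ⟨hpV, Finset.mem_Icc.2 ⟨le_rfl, hpq⟩⟩
        have hpZ : p ∈ Z := hXZ hpX
        rw [glue_split hσ hμNC hmono hcirc hpV]
        rw [ih i.castSucc rfl]
        have hYtop := ((KI_NC_master (σ := σ) hσp hσ.2.1 hμNC Y.card Y le_rfl {Y}
          (mem_NCset.2 (NCOn_top ⟨p, hpY⟩))).1)
        rw [hYtop]
        simp only [← hpdef, ← hqdef]
        simp only [← hXdef, ← hYdef, ← hZdef]
        have hXne : X.Nonempty := ⟨p, hpX⟩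
        have hZne : Z.Nonempty := ⟨p, hpZ⟩
        rw [if_pos hXne, if_pos hZne]
        by_cases h1 : restrictPart σ X = {X}
        · by_cases h2 : restrictPart σ Y = {Y}
          · have hZtop : restrictPart σ Z = {Z} := by
              rw [restrict_top_iff hσp ⟨p, hpZ⟩]
              obtain ⟨S₁, hS₁, hXS⟩ := (restrict_top_iff hσp ⟨p, hpX⟩).1 h1
              obtain ⟨S₂, hS₂, hYS⟩ := (restrict_top_iff hσp ⟨p, hpY⟩).1 h2
              have hSS : S₁ = S₂ := part_disj hσp hS₁ hS₂ (hXS hpX) (hYS hpY)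
              refine ⟨S₁, hS₁, ?_⟩
              intro x hx
              rcases le_or_gt x p with h | h
              · exact hXS (hZX x hx h)
              · exact hSS ▸ hYS (hZY x hx (le_of_lt h))
            rw [if_pos h1, if_pos h2, if_pos hZtop]
            ring
          · have hZtop : restrictPart σ Z ≠ {Z} := by
              intro hcon
              apply h2
              rw [restrict_top_iff hσp ⟨p, hpY⟩]
              obtain ⟨S₀, hS₀, hZS⟩ := (restrict_top_iff hσp ⟨p, hpZ⟩).1 hcon
              exact ⟨S₀, hS₀, hYZ.trans hZS⟩
            rw [if_neg h2, if_neg hZtop]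
            ring
        · have hZtop : restrictPart σ Z ≠ {Z} := by
            intro hcon
            apply h1
            rw [restrict_top_iff hσp ⟨p, hpX⟩]
            obtain ⟨S₀, hS₀, hZS⟩ := (restrict_top_iff hσp ⟨p, hpZ⟩).1 hcon
            exact ⟨S₀, hS₀, hXZ.trans hZS⟩
          rw [if_neg h1, if_neg hZtop]
          ring
      · -- p ∉ V : one side is empty
        by_cases hY0 : Y = ∅
        · have hZeq : Z = X := by
            apply Finset.Subset.antisymm
            · intro x hx
              rcases le_or_gt x p with h | h
              · exact hZX x hx h
              · exact absurd (hZY x hx (le_of_lt h)) (by rw [hY0]; simp)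
            · exact hXZ
          rw [hZeq]
          exact ih i.castSucc rfl
        · -- X = ∅, Z = Y
          have hX0 : X = ∅ := by
            rw [Finset.eq_empty_iff_forall_notMem]
            intro x hx
            apply hY0
            rw [Finset.eq_empty_iff_forall_notMem]
            intro y hy
            have hxV : x ∈ V := (mem_inter.1 hx).1
            have hyV : y ∈ V := (mem_inter.1 hy).1
            have hxp : x < p := lt_of_le_of_ne ((Finset.mem_Icc.1 (mem_inter.1 hx).2).2)
              (fun he => hpV (he ▸ hxV))
            have hyp : p < y := lt_of_le_of_ne ((Finset.mem_Icc.1 (mem_inter.1 hy).2).1)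
              (fun he => hpV (by rw [he]; exact hyV))
            exact hpV (hchain i.castSucc ⟨x, hxV, hxp⟩ ⟨y, hyV, hyp⟩)
          have hZeq : Z = Y := by
            apply Finset.Subset.antisymm
            · intro x hx
              rcases le_or_gt x p with h | h
              · exact absurd (hZX x hx h) (by rw [hX0]; simp)
              · exact hZY x hx (le_of_lt h)
            · exact hYZ
          rw [hZeq]
          have hYne : Y.Nonempty := Finset.nonempty_iff_ne_empty.2 hY0
          have hpY' : p ∉ Y := fun h => hpV (mem_inter.1 h).1
          have hsetseq : (INCset Y χ).filter (fun c => Refines (restrictPart σ Y) c)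
              = (NCset Y).filter (fun c => Refines (restrictPart σ Y) c ∧
                  Refines c ({Y} : Finset (Finset (Fin n)))) := by
            ext c
            rw [Finset.mem_filter, Finset.mem_filter, mem_INCset, mem_NCset]
            constructor
            · rintro ⟨hc, hσc⟩
              have hc' := (INCOn_iff_NCOn_interval hmono hcirc inter_subset_right hpY').1 hc
              exact ⟨hc', hσc, refines_top (fun B hB => (hc'.1.1 B hB).2)⟩
            · rintro ⟨hc, hσc, _⟩
              exact ⟨(INCOn_iff_NCOn_interval hmono hcirc inter_subset_right hpY').2 hc, hσc⟩
          rw [hsetseq]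
          rw [Finset.sum_congr rfl (fun c hc => wt_eq_ncw_interval hσp hμNC hmono
            inter_subset_right (mem_NCset.1 (Finset.mem_filter.1 hc).1).1)]
          have hKI := (KI_NC_master (σ := σ) hσp hσ.2.1 hμNC Y.card Y le_rfl {Y}
            (mem_NCset.2 (NCOn_top hYne))).1
          rw [hKI, if_pos hYne]
      -- end cases
  intro a
  exact main a.val a rfl
end INCP
namespace INCP
open Finset
variable {n m : ℕ} {χ : Fin n → Bool} {l : Fin (m + 1) → Fin n}
  {σ π : Finset (Finset (Fin n))}
  {μNC : Finset (Fin n) → Finset (Finset (Fin n)) → Finset (Finset (Fin n)) → ℂ}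

theorem block_chained (hπ : INCOn Finset.univ χ π)
    (hcirc : ∀ k : Fin n, χ k = true ↔ ∃ a, l a = k)
    {V : Finset (Fin n)} (hV : V ∈ π) :
    ∀ a : Fin (m + 1), (∃ s ∈ V, s < l a) → (∃ t ∈ V, l a < t) → l a ∈ V := by
  rintro a ⟨s, hsV, hs⟩ ⟨t, htV, ht⟩
  exact mem_block_of_between hπ hV hsV htV (Finset.mem_univ _) ((hcirc _).2 ⟨a, rfl⟩) hs ht

theorem subset_sup {P : Finset (Finset (Fin n))} {B : Finset (Fin n)} (hB : B ∈ P) :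
    B ⊆ P.sup id := Finset.le_sup (f := id) hB

theorem sup_partition (hπ : IsPartitionOn Finset.univ π) {P : Finset (Finset (Fin n))}
    (hP : P ⊆ π) : IsPartitionOn (P.sup id) P := by
  constructor
  · intro B hB
    exact ⟨part_nonempty hπ (hP hB), subset_sup hB⟩
  · intro x hx
    rw [Finset.mem_sup] at hx
    obtain ⟨B, hB, hxB⟩ := hx
    refine ⟨B, ⟨hB, hxB⟩, ?_⟩
    rintro C ⟨hC, hxC⟩
    exact part_disj hπ (hP hC) (hP hB) hxC hxB

theorem sup_erase (hπ : IsPartitionOn Finset.univ π) {P : Finset (Finset (Fin n))}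
    (hP : P ⊆ π) {V₀ : Finset (Fin n)} (hV₀ : V₀ ∈ P) :
    (P.erase V₀).sup id = P.sup id \ V₀ := by
  ext x
  rw [Finset.mem_sup, Finset.mem_sdiff, Finset.mem_sup]
  constructor
  · rintro ⟨B, hB, hxB⟩
    obtain ⟨hne, hBP⟩ := Finset.mem_erase.1 hB
    refine ⟨⟨B, hBP, hxB⟩, fun hxV => hne (part_disj hπ (hP hBP) (hP hV₀) hxB hxV)⟩
  · rintro ⟨⟨B, hB, hxB⟩, hxV⟩
    refine ⟨B, Finset.mem_erase.2 ⟨?_, hB⟩, hxB⟩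
    rintro rfl
    exact hxV hxB

theorem restrict_union_left {d e : Finset (Finset (Fin n))} {U : Finset (Fin n)}
    (hd : ∀ B ∈ d, B ⊆ U) (he : ∀ B ∈ e, B ∩ U = ∅) (hdne : ∀ B ∈ d, B.Nonempty) :
    restrictPart (d ∪ e) U = d := by
  ext C
  rw [mem_restrictPart]
  constructor
  · rintro ⟨⟨B, hB, rfl⟩, hne⟩
    rcases Finset.mem_union.1 hB with h | h
    · rwa [inter_eq_left.2 (hd B h)]
    · rw [he B h] at hne
      exact absurd hne (by simp)
  · intro hC
    exact ⟨⟨C, Finset.mem_union_left _ hC, inter_eq_left.2 (hd C hC)⟩, hdne C hC⟩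

theorem Icc_l_univ (hn : 0 < n) (h0 : l 0 = ⟨0, hn⟩)
    (hlast : l (Fin.last m) = ⟨n - 1, Nat.sub_lt hn one_pos⟩) :
    Finset.Icc (l 0) (l (Fin.last m)) = Finset.univ := by
  ext k
  simp only [Finset.mem_Icc, Finset.mem_univ, iff_true, h0, hlast]
  constructor
  · rw [Fin.le_def]
    exact Nat.zero_le _
  · rw [Fin.le_def]
    have := k.isLt
    simp only
    omega

theorem KI_INC (hn : 0 < n) (hmono : StrictMono l)
    (h0 : l 0 = ⟨0, hn⟩) (hlast : l (Fin.last m) = ⟨n - 1, Nat.sub_lt hn one_pos⟩)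
    (hcirc : ∀ k : Fin n, χ k = true ↔ ∃ a, l a = k)
    (hπ : INCOn Finset.univ χ π) (hσ : INCOn Finset.univ χ σ)
    (hμNC : ∀ A : Finset (Fin n), IsMobiusOn (NCset A) Refines (μNC A)) :
    ∀ N (P : Finset (Finset (Fin n))), P.card ≤ N → P ⊆ π →
      (∑ c ∈ (INCset (P.sup id) χ).filter
          (fun c => Refines (restrictPart σ (P.sup id)) c ∧ Refines c P), wt l μNC σ c)
      = if restrictPart σ (P.sup id) = P then 1 else 0 := by
  have hσp := hσ.1
  intro N
  induction N with
  | zero =>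
    intro P hcard hPπ
    have hP0 : P = ∅ := Finset.card_eq_zero.1 (le_antisymm hcard (Nat.zero_le _))
    subst hP0
    rw [Finset.sup_empty]
    show (∑ c ∈ (INCset (⊥ : Finset (Fin n)) χ).filter _, wt l μNC σ c) = _
    rw [show (⊥ : Finset (Fin n)) = ∅ from rfl, INCset_empty, restrictPart_empty]
    rw [Finset.filter_singleton, if_pos ⟨by intro B hB; simp at hB, by intro B hB; simp at hB⟩,
      Finset.sum_singleton]
    rw [if_pos rfl]
    unfold wt
    rw [Finset.prod_empty]
  | succ N ih =>
    intro P hcard hPπ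
    rcases Finset.eq_empty_or_nonempty P with hP0 | hPne
    · subst hP0
      rw [Finset.sup_empty]
      show (∑ c ∈ (INCset (⊥ : Finset (Fin n)) χ).filter _, wt l μNC σ c) = _
      rw [show (⊥ : Finset (Fin n)) = ∅ from rfl, INCset_empty, restrictPart_empty]
      rw [Finset.filter_singleton, if_pos ⟨by intro B hB; simp at hB, by intro B hB; simp at hB⟩,
        Finset.sum_singleton]
      rw [if_pos rfl]
      unfold wt
      rw [Finset.prod_empty]
    obtain ⟨V₀, hV₀⟩ := hPne
    have hPpart : IsPartitionOn (P.sup id) P := sup_partition hπ.1 hPπ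
    have hV₀ne : V₀.Nonempty := part_nonempty hπ.1 (hPπ hV₀)
    have hV₀sub : V₀ ⊆ P.sup id := subset_sup hV₀
    have hS'eq : (P.erase V₀).sup id = P.sup id \ V₀ := sup_erase hπ.1 hPπ hV₀
    set S := P.sup id with hSdef
    set S' := P.sup id \ V₀ with hS'def
    by_cases hguard : Refines (restrictPart σ S) P
    · -- bijection split
      have hsplit : (∑ c ∈ (INCset S χ).filter
            (fun c => Refines (restrictPart σ S) c ∧ Refines c P), wt l μNC σ c)
          = (∑ d ∈ (INCset V₀ χ).filter
                (fun d => Refines (restrictPart σ V₀) d), wt l μNC σ d) *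
            (∑ e ∈ (INCset S' χ).filter
                (fun e => Refines (restrictPart σ S') e ∧ Refines e (P.erase V₀)),
              wt l μNC σ e) := by
        rw [Finset.sum_mul_sum, ← Finset.sum_product']
        refine Finset.sum_nbij' (fun c => (restrictPart c V₀, restrictPart c S'))
          (fun pr => pr.1 ∪ pr.2) ?_ ?_ ?_ ?_ ?_
        · intro c hc
          obtain ⟨hcINC, hσc, hcP⟩ := Finset.mem_filter.1 hc
          have hc' := mem_INCset.1 hcINC
          rw [Finset.mem_product]
          constructor
          · rw [Finset.mem_filter]
            refine ⟨mem_INCset.2 (restrict_INCOn hc' hV₀sub), ?_⟩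
            rw [← restrictPart_restrictPart (P := σ) hV₀sub]
            exact refines_restrictPart hσc
          · rw [Finset.mem_filter]
            refine ⟨mem_INCset.2 (restrict_INCOn hc' Finset.sdiff_subset), ?_, ?_⟩
            · rw [← restrictPart_restrictPart (P := σ) (Finset.sdiff_subset : S' ⊆ S)]
              exact refines_restrictPart hσc
            · intro B hB
              obtain ⟨⟨B', hB'c, rfl⟩, hne⟩ := mem_restrictPart.1 hB
              obtain ⟨C, hC, hBC⟩ := hcP B' hB'c
              have hCne : C ≠ V₀ := by
                rintro rfl
                obtain ⟨x, hx⟩ := hne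
                obtain ⟨hx1, hx2⟩ := mem_inter.1 hx
                exact (Finset.mem_sdiff.1 hx2).2 (hBC hx1)
              exact ⟨C, Finset.mem_erase.2 ⟨hCne, hC⟩,
                (inter_subset_left).trans hBC⟩
        · intro pr hpr
          obtain ⟨hpr1, hpr2⟩ := Finset.mem_product.1 hpr
          obtain ⟨hdINC, hσd⟩ := Finset.mem_filter.1 hpr1
          obtain ⟨heINC, hσe, heP⟩ := Finset.mem_filter.1 hpr2
          have hd := mem_INCset.1 hdINC
          have he := mem_INCset.1 heINC
          have hdsub : ∀ B ∈ pr.1, B ⊆ V₀ := fun B hB => (hd.1.1 B hB).2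
          have hesub : ∀ B ∈ pr.2, B ⊆ S' := fun B hB => (he.1.1 B hB).2
          rw [Finset.mem_filter]
          refine ⟨mem_INCset.2 ⟨?_, ?_, ?_⟩, ?_, ?_⟩
          · have := isPartitionOn_union hd.1 he.1 (Finset.disjoint_sdiff)
            rwa [Finset.union_sdiff_of_subset hV₀sub] at this
          · -- noncrossing
            rintro U hU W hW hne ⟨s₁, r₁, s₂, r₂, h1, h2, h3, h4, h5, h6, h7⟩
            rcases Finset.mem_union.1 hU with hUd | hUe <;>
              rcases Finset.mem_union.1 hW with hWd | hWe
            · exact hd.2.1 U hUd W hWd hne ⟨s₁, r₁, s₂, r₂, h1, h2, h3, h4, h5, h6, h7⟩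
            · obtain ⟨C, hC, hWC⟩ := heP W hWe
              have hCe := Finset.mem_erase.1 hC
              exact hπ.2.1 V₀ (hPπ hV₀) C (hPπ hCe.2) (Ne.symm hCe.1)
                ⟨s₁, r₁, s₂, r₂, hdsub U hUd h1, hdsub U hUd h2, hWC h3, hWC h4, h5, h6, h7⟩
            · obtain ⟨C, hC, hUC⟩ := heP U hUe
              have hCe := Finset.mem_erase.1 hC
              exact hπ.2.1 C (hPπ hCe.2) V₀ (hPπ hV₀) hCe.1
                ⟨s₁, r₁, s₂, r₂, hUC h1, hUC h2, hdsub W hWd h3, hdsub W hWd h4, h5, h6, h7⟩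
            · exact he.2.1 U hUe W hWe hne ⟨s₁, r₁, s₂, r₂, h1, h2, h3, h4, h5, h6, h7⟩
          · -- INC condition for union
            intro U hU hinner k hk
            obtain ⟨W, hW, hneW, s, hsW, t, htW, hsur⟩ := hinner
            rcases Finset.mem_union.1 hU with hUd | hUe
            · rcases Finset.mem_union.1 hW with hWd | hWe
              · exact hd.2.2 U hUd ⟨W, hWd, hneW, s, hsW, t, htW, hsur⟩ k hk
              · obtain ⟨C, hC, hWC⟩ := heP W hWe
                have hCe := Finset.mem_erase.1 hC
                have hkC : k ∉ C := by
                  intro hkC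
                  exact hCe.1 (part_disj hπ.1 (hPπ hCe.2) (hPπ hV₀) hkC (hdsub U hUd hk))
                exact chi_false_of_between hπ (hPπ hCe.2) (hWC hsW) (hWC htW)
                  (Finset.mem_univ k) hkC (hsur k hk).1 (hsur k hk).2
            · rcases Finset.mem_union.1 hW with hWd | hWe
              · have hkV : k ∉ V₀ := by
                  intro hkV
                  obtain ⟨C, hC, hUC⟩ := heP U hUe
                  have hCe := Finset.mem_erase.1 hC
                  exact hCe.1 (part_disj hπ.1 (hPπ hCe.2) (hPπ hV₀) (hUC hk) hkV)
                exact chi_false_of_between hπ (hPπ hV₀) (hdsub W hWd hsW) (hdsub W hWd htW)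
                  (Finset.mem_univ k) hkV (hsur k hk).1 (hsur k hk).2
              · exact he.2.2 U hUe ⟨W, hWe, hneW, s, hsW, t, htW, hsur⟩ k hk
          · -- σ|S refines the union
            intro T hT
            obtain ⟨⟨S₀, hS₀, rfl⟩, hne⟩ := mem_restrictPart.1 hT
            obtain ⟨C, hC, hTC⟩ := hguard _ hT
            by_cases hCV : C = V₀
            · have heq : S₀ ∩ V₀ = S₀ ∩ S := by
                apply Finset.Subset.antisymm (inter_subset_inter subset_rfl hV₀sub)
                intro x hx
                exact mem_inter.2 ⟨(mem_inter.1 hx).1, hCV ▸ hTC hx⟩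
              have hmem : S₀ ∩ V₀ ∈ restrictPart σ V₀ :=
                mem_restrictPart.2 ⟨⟨S₀, hS₀, rfl⟩, by rwa [heq]⟩
              obtain ⟨D, hD, hsub⟩ := hσd _ hmem
              exact ⟨D, Finset.mem_union_left _ hD, by rw [← heq]; exact hsub⟩
            · have hCS' : C ⊆ S' := by
                rw [hS'def]
                intro x hx
                rw [Finset.mem_sdiff]
                exact ⟨subset_sup hC hx, fun hxV =>
                  hCV (part_disj hπ.1 (hPπ hC) (hPπ hV₀) hx hxV)⟩
              have heq : S₀ ∩ S' = S₀ ∩ S := by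
                apply Finset.Subset.antisymm (inter_subset_inter subset_rfl Finset.sdiff_subset)
                intro x hx
                exact mem_inter.2 ⟨(mem_inter.1 hx).1, hCS' (hTC hx)⟩
              have hmem : S₀ ∩ S' ∈ restrictPart σ S' :=
                mem_restrictPart.2 ⟨⟨S₀, hS₀, rfl⟩, by rwa [heq]⟩
              obtain ⟨D, hD, hsub⟩ := hσe _ hmem
              exact ⟨D, Finset.mem_union_right _ hD, by rw [← heq]; exact hsub⟩
          · -- union refines P
            intro B hB
            rcases Finset.mem_union.1 hB with h | h
            · exact ⟨V₀, hV₀, hdsub B h⟩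
            · obtain ⟨C, hC, hBC⟩ := heP B h
              exact ⟨C, (Finset.mem_erase.1 hC).2, hBC⟩
        · -- left inverse
          intro c hc
          obtain ⟨hcINC, hσc, hcP⟩ := Finset.mem_filter.1 hc
          have hc' := mem_INCset.1 hcINC
          have hstr := no_straddle hPpart hV₀ hcP
          have e1 : restrictPart c V₀ = c.filter (· ⊆ V₀) := by
            rw [filter_sub_eq_restrict hc'.1]
            intro B hB
            rcases hstr B hB with h | h
            · exact Or.inl h
            · exact Or.inr (Finset.disjoint_left.2 fun x hx hxV =>
                (Finset.mem_sdiff.1 (h hx)).2 hxV)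
          have e2 : restrictPart c S' = c.filter (fun B => B ⊆ S') := by
            rw [filter_sub_eq_restrict hc'.1]
            intro B hB
            rcases hstr B hB with h | h
            · exact Or.inr (Finset.disjoint_left.2 fun x hx hxS =>
                (Finset.mem_sdiff.1 hxS).2 (h hx))
            · exact Or.inl h
          dsimp only
          rw [e1, e2]
          ext B
          rw [Finset.mem_union, Finset.mem_filter, Finset.mem_filter]
          constructor
          · rintro (⟨h, _⟩ | ⟨h, _⟩) <;> exact h
          · intro hB
            rcases hstr B hB with h | h
            · exact Or.inl ⟨hB, h⟩
            · exact Or.inr ⟨hB, h⟩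
        · -- right inverse
          intro pr hpr
          obtain ⟨hpr1, hpr2⟩ := Finset.mem_product.1 hpr
          obtain ⟨hdINC, hσd⟩ := Finset.mem_filter.1 hpr1
          obtain ⟨heINC, _, _⟩ := Finset.mem_filter.1 hpr2
          have hd := mem_INCset.1 hdINC
          have he := mem_INCset.1 heINC
          have r1 : restrictPart (pr.1 ∪ pr.2) V₀ = pr.1 := by
            apply restrict_union_left (fun B hB => (hd.1.1 B hB).2)
              (fun B hB => ?_) (fun B hB => part_nonempty hd.1 hB)
            rw [Finset.eq_empty_iff_forall_notMem]
            intro x hx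
            obtain ⟨h1, h2⟩ := mem_inter.1 hx
            exact (Finset.mem_sdiff.1 ((he.1.1 B hB).2 h1)).2 h2
          have r2 : restrictPart (pr.1 ∪ pr.2) S' = pr.2 := by
            rw [Finset.union_comm]
            apply restrict_union_left (fun B hB => (he.1.1 B hB).2)
              (fun B hB => ?_) (fun B hB => part_nonempty he.1 hB)
            rw [Finset.eq_empty_iff_forall_notMem]
            intro x hx
            obtain ⟨h1, h2⟩ := mem_inter.1 hx
            exact (Finset.mem_sdiff.1 h2).2 ((hd.1.1 B hB).2 h1)
          rw [r1, r2]
        · -- weights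
          intro c hc
          obtain ⟨hcINC, hσc, hcP⟩ := Finset.mem_filter.1 hc
          have hc' := mem_INCset.1 hcINC
          have hstr := no_straddle hPpart hV₀ hcP
          have e1 : restrictPart c V₀ = c.filter (· ⊆ V₀) := by
            rw [filter_sub_eq_restrict hc'.1]
            intro B hB
            rcases hstr B hB with h | h
            · exact Or.inl h
            · exact Or.inr (Finset.disjoint_left.2 fun x hx hxV =>
                (Finset.mem_sdiff.1 (h hx)).2 hxV)
          have e2 : restrictPart c S' = c.filter (fun B => B ⊆ S') := by
            rw [filter_sub_eq_restrict hc'.1]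
            intro B hB
            rcases hstr B hB with h | h
            · exact Or.inr (Finset.disjoint_left.2 fun x hx hxS =>
                (Finset.mem_sdiff.1 hxS).2 (h hx))
            · exact Or.inl h
          have hcup : c.filter (· ⊆ V₀) ∪ c.filter (fun B => B ⊆ S') = c := by
            ext B
            rw [Finset.mem_union, Finset.mem_filter, Finset.mem_filter]
            constructor
            · rintro (⟨h, _⟩ | ⟨h, _⟩) <;> exact h
            · intro hB
              rcases hstr B hB with h | h
              · exact Or.inl ⟨hB, h⟩
              · exact Or.inr ⟨hB, h⟩
          have hdisjf : Disjoint (c.filter (· ⊆ V₀)) (c.filter (fun B => B ⊆ S')) := by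
            rw [Finset.disjoint_left]
            intro B h1 h2
            obtain ⟨hBc, hs1⟩ := Finset.mem_filter.1 h1
            obtain ⟨_, hs2⟩ := Finset.mem_filter.1 h2
            obtain ⟨x, hx⟩ := part_nonempty hc'.1 hBc
            exact (Finset.mem_sdiff.1 (hs2 hx)).2 (hs1 hx)
          dsimp only
          show wt l μNC σ c = wt l μNC σ _ * wt l μNC σ _
          rw [e1, e2]
          unfold wt
          rw [← Finset.prod_union hdisjf, hcup]
      rw [hsplit]
      -- first factor via E_master
      have hV₀full : V₀ ∩ Finset.Icc (l 0) (l (Fin.last m)) = V₀ := by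
        rw [Icc_l_univ hn h0 hlast, Finset.inter_univ]
      have hE := E_master hσ hμNC hmono hcirc
        (block_chained hπ hcirc (hPπ hV₀)) (Fin.last m)
      rw [hV₀full] at hE
      rw [hE, if_pos hV₀ne]
      -- second factor via ih
      have hcard' : (P.erase V₀).card ≤ N := by
        have := Finset.card_erase_of_mem hV₀
        have := Finset.card_pos.2 ⟨V₀, hV₀⟩
        omega
      have hih := ih (P.erase V₀) hcard' ((Finset.erase_subset _ _).trans hPπ)
      rw [hS'eq] at hih
      rw [hih]
      -- delta combination
      have hPNC : NCOn S P := ⟨hPpart, noncrossing_of_subset hPπ hπ.2.1⟩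
      exact delta_combine hσp hPNC hV₀ hguard
    · -- guard fails : both sides zero
      have hfe : (INCset S χ).filter
          (fun c => Refines (restrictPart σ S) c ∧ Refines c P) = ∅ := by
        rw [Finset.filter_eq_empty_iff]
        rintro c _ ⟨h1, h2⟩
        exact hguard (refines_trans h1 h2)
      rw [hfe, Finset.sum_empty, if_neg]
      rintro he
      exact hguard (he ▸ refines_refl _)
end INCP



/-- μ_INC(σ,π) = ∏_{V ∈ π} ∏_{i=1}^m μ_NC(σ_i|_{V ∩ [l_{i-1},l_i]},
1_{V ∩ [l_{i-1},l_i]}), where μ_NC is the Möbius function of the noncrossing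
partition lattice of the relevant ordered set and μ over the empty set is 1
(the one-block "partition" of ∅ being the empty partition). -/
theorem mobius_INC_eq_prod_mobius_NC {n m : ℕ} (hn : 0 < n) (χ : Fin n → Bool)
    (l : Fin (m + 1) → Fin n) (hmono : StrictMono l)
    (h0 : l 0 = ⟨0, hn⟩) (hlast : l (Fin.last m) = ⟨n - 1, Nat.sub_lt hn one_pos⟩)
    (hcirc : ∀ k : Fin n, χ k = true ↔ ∃ i, l i = k)
    (π σ : Finset (Finset (Fin n)))
    (hπ : INCOn Finset.univ χ π) (hσ : INCOn Finset.univ χ σ) (hle : Refines σ π)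
    (μ : Finset (Finset (Fin n)) → Finset (Finset (Fin n)) → ℂ)
    (hμ : IsMobiusOn (INCset Finset.univ χ) Refines μ)
    (μNC : Finset (Fin n) → Finset (Finset (Fin n)) → Finset (Finset (Fin n)) → ℂ)
    (hμNC : ∀ A : Finset (Fin n), IsMobiusOn (NCset A) Refines (μNC A)) :
    μ σ π = ∏ V ∈ π, ∏ i : Fin m,
      μNC (V ∩ Finset.Icc (l i.castSucc) (l i.succ))
        (restrictPart σ (V ∩ Finset.Icc (l i.castSucc) (l i.succ)))
        (if (V ∩ Finset.Icc (l i.castSucc) (l i.succ)).Nonempty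
          then {V ∩ Finset.Icc (l i.castSucc) (l i.succ)}
          else (∅ : Finset (Finset (Fin n)))) := by
  classical
  have hanti : ∀ a ∈ INCset Finset.univ χ, ∀ b ∈ INCset Finset.univ χ,
      Refines a b → Refines b a → a = b := fun a ha b hb h1 h2 =>
    INCP.refines_antisymm (INCP.mem_INCset.1 ha).1 (INCP.mem_INCset.1 hb).1 h1 h2
  have hF : ∀ a ∈ INCset Finset.univ χ, ∀ b ∈ INCset Finset.univ χ, Refines a b →
      (∑ c ∈ (INCset Finset.univ χ).filter (fun c => Refines a c ∧ Refines c b),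
        INCP.wt l μNC a c) = @ite ℂ (a = b) (Classical.propDecidable _) 1 0 := by
    intro a ha b hb _
    have hKI := INCP.KI_INC hn hmono h0 hlast hcirc (INCP.mem_INCset.1 hb)
      (INCP.mem_INCset.1 ha) hμNC b.card b le_rfl (subset_refl b)
    have hsup : b.sup id = Finset.univ := by
      ext x
      simp only [Finset.mem_univ, iff_true]
      rw [Finset.mem_sup]
      obtain ⟨B, hB, hxB⟩ := INCP.exists_block (INCP.mem_INCset.1 hb).1 (Finset.mem_univ x)
      exact ⟨B, hB, hxB⟩
    rw [hsup, INCP.restrictPart_self (INCP.mem_INCset.1 ha).1] at hKI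
    by_cases hde : a = b
    · rw [if_pos hde] at hKI ⊢
      exact hKI
    · rw [if_neg hde] at hKI ⊢
      exact hKI
  have hmain := INCP.mobius_unique (S := INCset Finset.univ χ) (le := Refines)
    (μ := μ) (F := fun a c => INCP.wt l μNC a c)
    (fun a _ => INCP.refines_refl a) (fun a b c => INCP.refines_trans) hanti hμ hF
    (INCP.mem_INCset.2 hσ) (INCP.mem_INCset.2 hπ) hle
  rw [hmain]
  unfold INCP.wt INCP.blockw
  rfl
end

section
/- (Boolean independence from projections.) Let (X_i, X_i°, ξ_i), i ∈ I, be vector spaces with specified vectors, let (X_⊎, X_⊎°, ξ) be their Boolean product with X_⊎ = ℂξ ⊕ (⊕_{i∈I} X_i°), let P_{⊎,i} be the projection of X_⊎ onto ℂξ ⊕ X_i° vanishing on ⊕_{j≠i} X_j°, and define α_i(T) = P_{⊎,i} T P_{⊎,i} for T ∈ L(X_i) (identifying ℂξ ⊕ X_i° with X_i). Then for any x_1,...,x_n with x_k ∈ α_{i_k}(L(X_{i_k})) and i_1 ≠ i_2, i_2 ≠ i_3, ..., i_{n-1} ≠ i_n, one has φ_ξ(x_1 x_2 ··· x_n) = φ_ξ(x_1)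 φ_ξ(x_2) ··· φ_ξ(x_n). -/
/-- Boolean independence from projections: in the Boolean product
X = ℂξ ⊕ (⊕ᵢ Nᵢ), with φ the functional determined by φ(ξ) = 1 and φ|_{Nᵢ} = 0,
Pᵢ the projection onto ℂξ ⊕ Nᵢ vanishing on the other summands, and operators
x_k = P_{i_k} T_k P_{i_k} with consecutive indices distinct, one has
φ(x₁ ⋯ x_n ξ) = φ(x₁ ξ) ⋯ φ(x_n ξ). -/
theorem boolean_independence_of_projections {I : Type*} [DecidableEq I]
    {X : Type*} [AddCommGroup X] [Module ℂ X]
    (ξ : X) (N : I → Submodule ℂ X) (φ : X →ₗ[ℂ] ℂ)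
    (hφξ : φ ξ = 1) (hφN : ∀ i, ∀ x ∈ N i, φ x = 0)
    (hinternal : DirectSum.IsInternal
      (fun o : Option I => o.elim (Submodule.span ℂ {ξ}) N))
    (P : I → Module.End ℂ X)
    (hPξ : ∀ i, P i ξ = ξ)
    (hPfix : ∀ i, ∀ x ∈ N i, P i x = x)
    (hPkill : ∀ i j, i ≠ j → ∀ x ∈ N j, P i x = 0)
    {n : ℕ} (x : Fin n → Module.End ℂ X) (idx : Fin n → I)
    (hx : ∀ k, ∃ T : Module.End ℂ X, x k = P (idx k) * T * P (idx k))
    (hadj : ∀ (k : Fin n) (h : k.val + 1 < n), idx k ≠ idx ⟨k.val + 1, h⟩) :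
    φ ((List.ofFn x).prod ξ) = ∏ k, φ (x k ξ) := by
  -- Key structural lemma: P i v = φ(v) • ξ + (element of N i)
  have key : ∀ (i : I) (v : X), ∃ m ∈ N i, P i v = φ v • ξ + m := by
    intro i v
    have hv : v ∈ ⨆ o : Option I, (Option.elim o (Submodule.span ℂ {ξ}) N) := by
      rw [hinternal.submodule_iSup_eq_top]; trivial
    refine Submodule.iSup_induction (motive := fun w => ∃ m ∈ N i, P i w = φ w • ξ + m)
      _ hv ?_ ?_ ?_
    · rintro (_ | j) w hw
      · obtain ⟨c, rfl⟩ := Submodule.mem_span_singleton.mp hw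
        refine ⟨0, (N i).zero_mem, ?_⟩
        rw [map_smul, map_smul, hPξ i, hφξ, add_zero, smul_eq_mul, mul_one]
      · by_cases hij : j = i
        · subst hij
          exact ⟨w, hw, by rw [hPfix _ _ hw, hφN _ _ hw, zero_smul, zero_add]⟩
        · exact ⟨0, (N i).zero_mem, by
            rw [hPkill i j (Ne.symm hij) w hw, hφN _ _ hw, zero_smul, add_zero]⟩
    · exact ⟨0, (N i).zero_mem, by simp⟩
    · rintro a b ⟨m, hm, ha⟩ ⟨m', hm', hb⟩
      refine ⟨m + m', (N i).add_mem hm hm', ?_⟩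
      rw [map_add, map_add, ha, hb, add_smul]; abel
  -- x k ξ = φ (x k ξ) • ξ + m for some m ∈ N (idx k)
  have keyx : ∀ k : Fin n, ∃ m ∈ N (idx k), x k ξ = φ (x k ξ) • ξ + m := by
    intro k
    obtain ⟨T, hT⟩ := hx k
    have hxk : x k ξ = P (idx k) (T ξ) := by
      rw [hT]; simp [Module.End.mul_apply, hPξ]
    obtain ⟨m, hm, hPm⟩ := key (idx k) (T ξ)
    have hφ : φ (x k ξ) = φ (T ξ) := by
      rw [hxk, hPm, map_add, map_smul, hφξ, hφN _ _ hm, smul_eq_mul, mul_one, add_zero]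
    exact ⟨m, hm, by rw [hφ, hxk, hPm]⟩
  -- x k kills N j for j ≠ idx k
  have killx : ∀ (k : Fin n) (j : I), j ≠ idx k → ∀ m ∈ N j, x k m = 0 := by
    intro k j hj m hm
    obtain ⟨T, hT⟩ := hx k
    rw [hT]
    simp [Module.End.mul_apply, hPkill (idx k) j (Ne.symm hj) m hm]
  -- Main structural induction
  have main : ∀ (n : ℕ) (x : Fin (n + 1) → Module.End ℂ X) (idx : Fin (n + 1) → I),
      (∀ k : Fin (n + 1), ∃ m ∈ N (idx k), x k ξ = φ (x k ξ) • ξ + m) →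
      (∀ (k : Fin (n + 1)) (j : I), j ≠ idx k → ∀ m ∈ N j, x k m = 0) →
      (∀ (k : Fin (n + 1)) (h : k.val + 1 < n + 1), idx k ≠ idx ⟨k.val + 1, h⟩) →
      ∃ m ∈ N (idx 0), (List.ofFn x).prod ξ = (∏ k, φ (x k ξ)) • ξ + m := by
    intro n
    induction n with
    | zero =>
      intro x idx hkeyx _ _
      obtain ⟨m, hm, hxm⟩ := hkeyx 0
      refine ⟨m, hm, ?_⟩
      simp only [List.ofFn_succ, List.ofFn_zero, List.prod_cons, List.prod_nil, mul_one]
      rw [hxm, Fin.prod_univ_one]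
    | succ n ih =>
      intro x idx hkeyx hkillx hadj
      obtain ⟨m', hm', hprod'⟩ := ih (fun k => x k.succ) (fun k => idx k.succ)
        (fun k => hkeyx k.succ) (fun k => hkillx k.succ)
        (fun k h => by
          have hk := k.is_lt
          have h2 : (k.succ : Fin (n + 2)).val + 1 < n + 2 := by
            rw [Fin.val_succ]; omega
          have hne := hadj k.succ h2
          have heq : (⟨(k.succ : Fin (n + 2)).val + 1, h2⟩ : Fin (n + 2))
              = (⟨k.val + 1, h⟩ : Fin (n + 1)).succ := by
            ext; simp [Fin.val_succ]
          rwa [heq] at hne)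
      obtain ⟨m, hm, hxm⟩ := hkeyx 0
      refine ⟨(∏ k : Fin (n + 1), φ (x k.succ ξ)) • m,
        (N (idx 0)).smul_mem _ hm, ?_⟩
      have hlist : (List.ofFn x) = x 0 :: List.ofFn (fun k => x k.succ) := by
        rw [List.ofFn_succ]
      rw [hlist, List.prod_cons, Module.End.mul_apply, hprod']
      have h1lt : (0 : Fin (n + 2)).val + 1 < n + 2 := by simp only [Fin.val_zero]; omega
      have h1eq : (⟨(0 : Fin (n + 2)).val + 1, h1lt⟩ : Fin (n + 2)) = 1 := by
        ext; simp
      have h01 : idx 1 ≠ idx 0 := by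
        have := hadj 0 h1lt
        rw [h1eq] at this
        exact this.symm
      have hkill0 : x 0 m' = 0 := by
        refine hkillx 0 (idx 1) h01 m' ?_
        have hs : ((0 : Fin (n + 1)).succ : Fin (n + 2)) = 1 := by ext; simp
        rwa [hs] at hm'
      have hcoef : (∏ k : Fin (n + 2), φ (x k ξ))
          = (∏ k : Fin (n + 1), φ (x k.succ ξ)) * φ (x 0 ξ) := by
        rw [Fin.prod_univ_succ]; ring
      rw [map_add, map_smul, hkill0, add_zero, hxm, smul_add, smul_smul, hcoef]
  -- Conclude
  cases n with
  | zero =>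
    simp [hφξ]
  | succ n =>
    obtain ⟨m, hm, hprod⟩ := main n x idx keyx killx hadj
    rw [hprod, map_add, map_smul, hφξ, hφN _ _ hm, smul_eq_mul, mul_one, add_zero]
end
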